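/- Normal form for FO[∼]: for every finite alphabet A = A_s ⊎ A_e and every sentence φ ∈ FO_A[∼], there exists B ∈ ℕ such that φ is equivalent, over all pairs (P,w) of a process triple P and a P-execution w, to a finite disjunction of finite conjunctions of formulas of the form ∃^{⋈m} y.(θ(y) ∧ ψ_{B,ℓ}(y)), where ⋈ ∈ {≥,=}, m ∈ ℕ, θ ∈ T = {s,e,se}, and ℓ ∈ {0,…,B}^A. -/

import Mathlib

namespace PSyn

/-! ### Basic objects: types, alphabets, processes, events, executions -/

/-- The three process types: system, environment, mixed. -/
inductive PType where
  | s | e | se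
deriving DecidableEq

/-- A finite alphabet: letters are the naturals `0, …, n-1`;
`sys a = true` means `a` is a system action (`a ∈ A_s`), otherwise `a ∈ A_e`. -/
structure Alphabet where
  n : ℕ
  sys : ℕ → Bool

/-- An event is a pair (letter, process identity). -/
abbrev Event := ℕ × ℕ

/-- A process triple `P = (P_s, P_e, P_se)`: pairwise disjoint finite sets of processes. -/
structure ProcTriple where
  Ps : Finset ℕ
  Pe : Finset ℕ
  Pse : Finset ℕ
  disj_se : Disjoint Ps Pe
  disj_sse : Disjoint Ps Pse
  disj_ese : Disjoint Pe Pse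

def ProcTriple.ofType (P : ProcTriple) : PType → Finset ℕ
  | .s => P.Ps
  | .e => P.Pe
  | .se => P.Pse

def ProcTriple.all (P : ProcTriple) : Finset ℕ := P.Ps ∪ P.Pe ∪ P.Pse

/-- `σ ∈ Σ_s = A_s × (P_s ∪ P_se)`. -/
def isSysEvent (Alph : Alphabet) (P : ProcTriple) (σ : Event) : Prop :=
  σ.1 < Alph.n ∧ Alph.sys σ.1 = true ∧ (σ.2 ∈ P.Ps ∨ σ.2 ∈ P.Pse)

/-- `σ ∈ Σ_e = A_e × (P_e ∪ P_se)`. -/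
def isEnvEvent (Alph : Alphabet) (P : ProcTriple) (σ : Event) : Prop :=
  σ.1 < Alph.n ∧ Alph.sys σ.1 = false ∧ (σ.2 ∈ P.Pe ∨ σ.2 ∈ P.Pse)

def isEvent (Alph : Alphabet) (P : ProcTriple) (σ : Event) : Prop :=
  isSysEvent Alph P σ ∨ isEnvEvent Alph P σ

/-- A finite or infinite word over events. -/
inductive Exec where
  | fin : List Event → Exec
  | inf : (ℕ → Event) → Exec

/-- A `P`-execution: every event is an event of `P` over the alphabet. -/
def Exec.valid (Alph : Alphabet) (P : ProcTriple) : Exec → Prop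
  | .fin l => ∀ σ ∈ l, isEvent Alph P σ
  | .inf g => ∀ i, isEvent Alph P (g i)

def Exec.at? : Exec → ℕ → Option Event
  | .fin l, i => l[i]?
  | .inf g, i => some (g i)

/-- The set of positions of an execution. -/
def Exec.posDom : Exec → ℕ → Prop
  | .fin l, i => i < l.length
  | .inf _, _ => True

/-- Elements of the structure associated with `(P, w)`:
`inl p` is a process, `inr i` is a position. -/
abbrev Elem := ℕ ⊕ ℕ

/-- The universe `P ⊎ Pos(w)`. -/
def elemDom (P : ProcTriple) (w : Exec) : Elem → Prop
  | .inl p => p ∈ P.all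
  | .inr i => w.posDom i

/-- The process an element belongs to (a process belongs to itself; a position
to the process executing it).  Two elements are `∼`-equivalent iff they have
the same process. -/
def procOf (w : Exec) : Elem → Option ℕ
  | .inl p => some p
  | .inr i => (w.at? i).map Prod.snd

def letterOf (w : Exec) : Elem → Option ℕ
  | .inl _ => none
  | .inr i => (w.at? i).map Prod.fst

/-! ### First-order logic FO_A[∼,<,+1] -/

/-- Syntax of `FO_A[∼,<,+1]`; variables are naturals, letters are naturals. -/
inductive FO where
  | ptype : PType → ℕ → FO
  | letter : ℕ → ℕ → FO
  | eq : ℕ → ℕ → FO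
  | sim : ℕ → ℕ → FO
  | lt : ℕ → ℕ → FO
  | succ : ℕ → ℕ → FO
  | not : FO → FO
  | or : FO → FO → FO
  | ex : ℕ → FO → FO

/-- Satisfaction of a formula in the structure `S_(P,w)` under a valuation. -/
def Sat (P : ProcTriple) (w : Exec) : (ℕ → Elem) → FO → Prop
  | v, .ptype θ x => ∃ p, v x = Sum.inl p ∧ p ∈ P.ofType θ
  | v, .letter a x => letterOf w (v x) = some a
  | v, .eq x y => v x = v y
  | v, .sim x y => (procOf w (v x)).isSome ∧ procOf w (v x) = procOf w (v y)
  | v, .lt x y => ∃ i j, v x = Sum.inr i ∧ v y = Sum.inr j ∧ i < j ∧ w.posDom j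
  | v, .succ x y => ∃ i, v x = Sum.inr i ∧ v y = Sum.inr (i + 1) ∧ w.posDom (i + 1)
  | v, .not φ => ¬ Sat P w v φ
  | v, .or φ ψ => Sat P w v φ ∨ Sat P w v ψ
  | v, .ex x φ => ∃ u : Elem, elemDom P w u ∧ Sat P w (Function.update v x u) φ

/-- Satisfaction for sentences: `(P,w) ⊨ φ` (the valuation is irrelevant for sentences). -/
def SatS (P : ProcTriple) (w : Exec) (φ : FO) : Prop :=
  Sat P w (fun _ => Sum.inl 0) φ

def FO.free : FO → Finset ℕ
  | .ptype _ x => {x}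
  | .letter _ x => {x}
  | .eq x y => {x, y}
  | .sim x y => {x, y}
  | .lt x y => {x, y}
  | .succ x y => {x, y}
  | .not φ => φ.free
  | .or φ ψ => φ.free ∪ ψ.free
  | .ex x φ => φ.free.erase x

/-- A sentence has no free variables. -/
def FO.isSentence (φ : FO) : Prop := φ.free = ∅

def FO.vars : FO → Finset ℕ
  | .ptype _ x => {x}
  | .letter _ x => {x}
  | .eq x y => {x, y}
  | .sim x y => {x, y}
  | .lt x y => {x, y}
  | .succ x y => {x, y}
  | .not φ => φ.vars
  | .or φ ψ => φ.vars ∪ ψ.vars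
  | .ex x φ => insert x φ.vars

/-- The two-variable fragment: only the variable names `0` and `1` are used. -/
def FO.twoVar (φ : FO) : Prop := φ.vars ⊆ ({0, 1} : Finset ℕ)

/-- The fragment `FO_A[∼]`: neither `<` nor `+1` occurs. -/
def FO.onlySim : FO → Prop
  | .lt _ _ => False
  | .succ _ _ => False
  | .not φ => φ.onlySim
  | .or φ ψ => φ.onlySim ∧ ψ.onlySim
  | .ex _ φ => φ.onlySim
  | _ => True

/-! ### The asynchronous synthesis game and `Win(φ)` -/

/-- A `P`-strategy for System: `none` plays ε, `some σ` proposes the system event `σ`. -/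
abbrev Strategy := List Event → Option Event

/-- The strategy only proposes system events (its codomain is `Σ_s ∪ {ε}`). -/
def properStrategy (Alph : Alphabet) (P : ProcTriple) (f : Strategy) : Prop :=
  ∀ u σ, f u = some σ → isSysEvent Alph P σ

/-- The prefix of length `i` of an execution. -/
def Exec.pre : Exec → ℕ → List Event
  | .fin l, i => l.take i
  | .inf g, i => (List.range i).map g

/-- `w` is `f`-compatible: every system event of `w` is the one proposed by `f`. -/
def compatible (Alph : Alphabet) (P : ProcTriple) (f : Strategy) (w : Exec) : Prop :=
  ∀ i σ, w.at? i = some σ → isSysEvent Alph P σ → f (w.pre i) = some σ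

/-- `w` is `f`-fair. -/
def fair (Alph : Alphabet) (P : ProcTriple) (f : Strategy) : Exec → Prop
  | .fin l => f l = none
  | .inf g =>
      {i : ℕ | f (Exec.pre (Exec.inf g) i) ≠ none}.Infinite →
      {j : ℕ | isSysEvent Alph P (g j)}.Infinite

/-- `f` is `P`-winning for `φ`. -/
def winningStrategy (Alph : Alphabet) (P : ProcTriple) (φ : FO) (f : Strategy) : Prop :=
  properStrategy Alph P f ∧
  ∀ w : Exec, w.valid Alph P → compatible Alph P f w → fair Alph P f w → SatS P w φ

/-- Triples of naturals, indexed by the process types (s, e, se). -/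
abbrev Tok := ℕ × ℕ × ℕ

/-- `Win(φ)`: the set of triples `(k_s, k_e, k_se)` admitting a winning System strategy. -/
def WinFO (Alph : Alphabet) (φ : FO) : Set Tok :=
  { k | ∃ P : ProcTriple,
      P.Ps.card = k.1 ∧ P.Pe.card = k.2.1 ∧ P.Pse.card = k.2.2 ∧
      ∃ f : Strategy, winningStrategy Alph P φ f }

/-! ### Parameterized vector games -/

/-- Locations: `L = {0,…,B}^A`. -/
abbrev Loc (n B : ℕ) := Fin n → Fin (B + 1)

/-- A local acceptance condition: for each process type a pair `(⋈, n)`,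
where the Boolean `true` stands for `=` and `false` for `≥`. -/
abbrev LCond := (Bool × ℕ) × (Bool × ℕ) × (Bool × ℕ)

/-- Configurations: `C : L → ℕ^T`. -/
abbrev GConfig (n B : ℕ) := Loc n B → Tok

/-- Transitions: maps `L × L → ℕ^T`. -/
abbrev GTrans (n B : ℕ) := Loc n B → Loc n B → Tok

/-- A parameterized vector game `G = (A, B, F)`. -/
structure PVG where
  Alph : Alphabet
  B : ℕ
  F : List (Loc Alph.n B → LCond)

def cmpHolds (c : Bool × ℕ) (m : ℕ) : Prop := if c.1 then m = c.2 else c.2 ≤ m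

def lcondHolds (κ : LCond) (t : Tok) : Prop :=
  cmpHolds κ.1 t.1 ∧ cmpHolds κ.2.1 t.2.1 ∧ cmpHolds κ.2.2 t.2.2

/-- `C ⊨ F`. -/
def accept (G : PVG) (C : GConfig G.Alph.n G.B) : Prop :=
  ∃ κ ∈ G.F, ∀ ℓ, lcondHolds (κ ℓ) (C ℓ)

/-- `ℓ + a`: increase coordinate `a` by one, capped at `B`. -/
def locAdd {n B : ℕ} (ℓ : Loc n B) (a : ℕ) : Loc n B :=
  fun i =>
    if (i : ℕ) = a then ⟨min ((ℓ i : ℕ) + 1) B, Nat.lt_succ_of_le (min_le_right _ _)⟩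
    else ℓ i

/-- `ℓ + w` for a finite word `w` over the alphabet. -/
def locAddW {n B : ℕ} (ℓ : Loc n B) : List ℕ → Loc n B
  | [] => ℓ
  | a :: u => locAddW (locAdd ℓ a) u

def isSysWord (Alph : Alphabet) (u : List ℕ) : Prop :=
  ∀ a ∈ u, a < Alph.n ∧ Alph.sys a = true

def isEnvWord (Alph : Alphabet) (u : List ℕ) : Prop :=
  ∀ a ∈ u, a < Alph.n ∧ Alph.sys a = false

/-- System transitions: values in `ℕ × {0} × ℕ` and moves along system words. -/
def isSysTrans (G : PVG) (τ : GTrans G.Alph.n G.B) : Prop :=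
  ∀ ℓ ℓ', (τ ℓ ℓ').2.1 = 0 ∧
    (τ ℓ ℓ' ≠ ((0, 0, 0) : Tok) → ∃ u : List ℕ, isSysWord G.Alph u ∧ ℓ' = locAddW ℓ u)

/-- Environment transitions: values in `{0} × ℕ × ℕ` and moves along environment words. -/
def isEnvTrans (G : PVG) (τ : GTrans G.Alph.n G.B) : Prop :=
  ∀ ℓ ℓ', (τ ℓ ℓ').1 = 0 ∧
    (τ ℓ ℓ' ≠ ((0, 0, 0) : Tok) → ∃ u : List ℕ, isEnvWord G.Alph u ∧ ℓ' = locAddW ℓ u)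

def outm {n B : ℕ} (τ : GTrans n B) (ℓ : Loc n B) : Tok := ∑ ℓ' : Loc n B, τ ℓ ℓ'

def inm {n B : ℕ} (τ : GTrans n B) (ℓ : Loc n B) : Tok := ∑ ℓ' : Loc n B, τ ℓ' ℓ

/-- Componentwise order on `ℕ^T`. -/
def tokLe (s t : Tok) : Prop := s.1 ≤ t.1 ∧ s.2.1 ≤ t.2.1 ∧ s.2.2 ≤ t.2.2

def applicable {n B : ℕ} (τ : GTrans n B) (C : GConfig n B) : Prop :=
  ∀ ℓ, tokLe (outm τ ℓ) (C ℓ)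

/-- `τ(C)(ℓ) = C(ℓ) − out_τ(ℓ) + in_τ(ℓ)` (componentwise). -/
def applyT {n B : ℕ} (τ : GTrans n B) (C : GConfig n B) : GConfig n B :=
  fun ℓ => C ℓ - outm τ ℓ + inm τ ℓ

/-- The configuration reached from `C0` after applying the transitions `ts` in order. -/
def confAt {n B : ℕ} (C0 : GConfig n B) (ts : List (GTrans n B)) : GConfig n B :=
  ts.foldl (fun C τ => applyT τ C) C0

/-- A valid `C0`-play, represented by its list of transitions
(step `i`, 0-based, is System's if `i` is even, Environment's if `i` is odd). -/
def validPlay (G : PVG) (C0 : GConfig G.Alph.n G.B)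
    (ts : List (GTrans G.Alph.n G.B)) : Prop :=
  ∀ i (h : i < ts.length),
    applicable (ts.get ⟨i, h⟩) (confAt C0 (ts.take i)) ∧
    (i % 2 = 0 → isSysTrans G (ts.get ⟨i, h⟩) ∧ accept G (confAt C0 (ts.take (i + 1)))) ∧
    (i % 2 = 1 → isEnvTrans G (ts.get ⟨i, h⟩) ∧ ¬ accept G (confAt C0 (ts.take (i + 1))))

/-- A strategy for System in the game: a partial map from plays to transitions. -/
abbrev GStrat (n B : ℕ) := List (GTrans n B) → Option (GTrans n B)

/-- `f(C)` is defined, and whenever `f(π) = τ` for a valid play π ending in `C_i`,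
`τ` is a system transition, applicable at `C_i`, and `τ(C_i) ⊨ F`. -/
def properGStrat (G : PVG) (C0 : GConfig G.Alph.n G.B) (f : GStrat G.Alph.n G.B) : Prop :=
  (f []).isSome ∧
  ∀ ts τ, validPlay G C0 ts → f ts = some τ →
    isSysTrans G τ ∧ applicable τ (confAt C0 ts) ∧ accept G (applyT τ (confAt C0 ts))

def gCompatible {n B : ℕ} (f : GStrat n B) (ts : List (GTrans n B)) : Prop :=
  ∀ i (h : i < ts.length), i % 2 = 0 → f (ts.take i) = some (ts.get ⟨i, h⟩)

def gMaximal (G : PVG) (C0 : GConfig G.Alph.n G.B) (f : GStrat G.Alph.n G.B)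
    (ts : List (GTrans G.Alph.n G.B)) : Prop :=
  ¬ ∃ ts', ts <+: ts' ∧ ts ≠ ts' ∧ validPlay G C0 ts' ∧ gCompatible f ts'

def winningGStrat (G : PVG) (C0 : GConfig G.Alph.n G.B) (f : GStrat G.Alph.n G.B) : Prop :=
  properGStrat G C0 f ∧
  ∀ ts, validPlay G C0 ts → gCompatible f ts → gMaximal G C0 f ts →
    accept G (confAt C0 ts)

/-- A configuration is winning for System if System has a winning strategy from it. -/
def winningConf (G : PVG) (C0 : GConfig G.Alph.n G.B) : Prop :=
  ∃ f, winningGStrat G C0 f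

/-- The all-zero location `ℓ_0`. -/
def loc0 (n B : ℕ) : Loc n B := fun _ => 0

/-- `C_k⃗`: all `k⃗` tokens on `ℓ_0`. -/
def initConfig {n B : ℕ} (k : Tok) : GConfig n B :=
  Function.update (fun _ => ((0, 0, 0) : Tok)) (loc0 n B) k

/-- `Win(G)`. -/
def WinG (G : PVG) : Set Tok :=
  { k | winningConf G (initConfig k) }

/-! ### Environment chains and constants of a game -/

/-- `C <_e C'`. -/
def envStep (G : PVG) (C C' : GConfig G.Alph.n G.B) : Prop :=
  C ≠ C' ∧ ∃ τ, isEnvTrans G τ ∧ applicable τ C ∧ C' = applyT τ C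

/-- There is a chain `C = C_0 <_e C_1 <_e … <_e C_d`. -/
def hasChain (G : PVG) (C : GConfig G.Alph.n G.B) (d : ℕ) : Prop :=
  ∃ cs : ℕ → GConfig G.Alph.n G.B, cs 0 = C ∧ ∀ i < d, envStep G (cs i) (cs (i + 1))

/-- `C ∈ Conf_d`: the longest `<_e`-chain starting in `C` has length exactly `d`. -/
def ConfD (G : PVG) (C : GConfig G.Alph.n G.B) (d : ℕ) : Prop :=
  hasChain G C d ∧ ¬ hasChain G C (d + 1)

def lcondMax (κ : LCond) : ℕ := max κ.1.2 (max κ.2.1.2 κ.2.2.2)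

/-- `K`: the largest constant occurring in the acceptance condition `F`. -/
def maxConst (G : PVG) : ℕ :=
  (G.F.map fun κ => Finset.univ.sup fun ℓ : Loc G.Alph.n G.B => lcondMax (κ ℓ)).foldr max 0

/-- `|A_e|`: the number of environment letters. -/
def envCard (Alph : Alphabet) : ℕ :=
  ((Finset.range Alph.n).filter fun a => Alph.sys a = false).card

/-- `|L| = (B+1)^|A|`. -/
def numLoc (G : PVG) : ℕ := (G.B + 1) ^ G.Alph.n

/-! ### Cutoffs -/

/-- `k⃗_0` is a cutoff of `W` with respect to `(N_s, N_e, N_se)`. -/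
def IsCutoff (Ns Ne Nse : Set ℕ) (W : Set Tok) (k0 : Tok) : Prop :=
  k0.1 ∈ Ns ∧ k0.2.1 ∈ Ne ∧ k0.2.2 ∈ Nse ∧
  ((∀ k : Tok, k.1 ∈ Ns → k.2.1 ∈ Ne → k.2.2 ∈ Nse →
      k0.1 ≤ k.1 → k0.2.1 ≤ k.2.1 → k0.2.2 ≤ k.2.2 → k ∈ W) ∨
   (∀ k : Tok, k.1 ∈ Ns → k.2.1 ∈ Ne → k.2.2 ∈ Nse →
      k0.1 ≤ k.1 → k0.2.1 ≤ k.2.1 → k0.2.2 ≤ k.2.2 → k ∉ W))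

/-! ### Counting formulas and the normal form for FO[∼] -/

def FO.and (φ ψ : FO) : FO := FO.not (FO.or (FO.not φ) (FO.not ψ))

def FO.imp (φ ψ : FO) : FO := FO.or (FO.not φ) ψ

def FO.iff (φ ψ : FO) : FO := FO.and (φ.imp ψ) (ψ.imp φ)

def FO.all (x : ℕ) (φ : FO) : FO := FO.not (FO.ex x (FO.not φ))

def trueFO : FO := FO.eq 0 0

def bigAnd (l : List FO) : FO := l.foldr FO.and trueFO

def bigOr (l : List FO) : FO := l.foldr FO.or (FO.not trueFO)

/-- `∃^{≥m} y. (mk y)`: there are at least `m` distinct witnesses; the witness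
variables are `base, base+1, …, base+m-1`. -/
def exGe (m base : ℕ) (mk : ℕ → FO) : FO :=
  let distinct : List FO :=
    (List.range m).flatMap fun i =>
      ((List.range m).filter fun j => decide (i < j)).map fun j =>
        FO.not (FO.eq (base + i) (base + j))
  let body : FO :=
    FO.and (bigAnd distinct) (bigAnd ((List.range m).map fun i => mk (base + i)))
  ((List.range m).map (base + ·)).foldr FO.ex body

/-- `∃^{=m} y. (mk y) := ∃^{≥m} y. (mk y) ∧ ¬ ∃^{≥m+1} y. (mk y)`. -/
def exEq (m base : ℕ) (mk : ℕ → FO) : FO :=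
  FO.and (exGe m base mk) (FO.not (exGe (m + 1) base mk))

/-- `ψ_{B,ℓ}(y)`: in the class of `y`, each letter `a` occurs exactly `ℓ(a)` times
if `ℓ(a) < B`, and at least `ℓ(a)` times if `ℓ(a) = B`. -/
def psiCount (n B : ℕ) (ℓ : ℕ → ℕ) (y : ℕ) : FO :=
  bigAnd ((List.range n).map fun a =>
    if ℓ a < B then
      exEq (ℓ a) (y + 1) (fun z => FO.and (FO.sim y z) (FO.letter a z))
    else
      exGe (ℓ a) (y + 1) (fun z => FO.and (FO.sim y z) (FO.letter a z)))

/-- `∃^{⋈m} y. (θ(y) ∧ ψ_{B,ℓ}(y))`, where `⋈` is `=` if `isEq` and `≥` otherwise. -/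
def nfAtom (n B : ℕ) (isEq : Bool) (m : ℕ) (θ : PType) (ℓ : ℕ → ℕ) : FO :=
  let mk : ℕ → FO := fun y => FO.and (FO.ptype θ y) (psiCount n B ℓ y)
  if isEq then exEq m 0 mk else exGe m 0 mk

/-! ### The normalized synthesis problem -/

/-- A normalized strategy: maps finite executions to finite system words. -/
abbrev NormStrategy := List Event → Option (List Event)

/-- A normalized `P`-execution, given by its block decomposition `bs`
(`bs[j]` with `j` even is a System block, `j` odd an Environment block;
this corresponds to the 1-based indexing `w = w_1 … w_n` of the paper). -/
def NormExec (Alph : Alphabet) (P : ProcTriple) (φ : FO) (bs : List (List Event)) : Prop :=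
  1 ≤ bs.length ∧
  ∀ j (h : j < bs.length),
    (j % 2 = 0 → (∀ σ ∈ bs.get ⟨j, h⟩, isSysEvent Alph P σ) ∧
        SatS P (Exec.fin ((bs.take (j + 1)).flatten)) φ) ∧
    (j % 2 = 1 → (∀ σ ∈ bs.get ⟨j, h⟩, isEnvEvent Alph P σ) ∧
        ¬ SatS P (Exec.fin ((bs.take (j + 1)).flatten)) φ)

/-- Properness of a normalized strategy: `f(ε)` is defined, outputs are system
words, and `(P, w · f(w)) ⊨ φ` whenever `f(w)` is defined. -/
def properNStrat (Alph : Alphabet) (P : ProcTriple) (φ : FO) (f : NormStrategy) : Prop :=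
  (f []).isSome ∧
  ∀ w u, f w = some u →
    (∀ σ ∈ u, isSysEvent Alph P σ) ∧ SatS P (Exec.fin (w ++ u)) φ

def nCompatible (f : NormStrategy) (bs : List (List Event)) : Prop :=
  ∀ j (h : j < bs.length), j % 2 = 0 → f ((bs.take j).flatten) = some (bs.get ⟨j, h⟩)

def nMaximal (Alph : Alphabet) (P : ProcTriple) (φ : FO) (f : NormStrategy)
    (bs : List (List Event)) : Prop :=
  ¬ ∃ bs', bs <+: bs' ∧ bs ≠ bs' ∧ NormExec Alph P φ bs' ∧ nCompatible f bs'

def winningNStrategy (Alph : Alphabet) (P : ProcTriple) (φ : FO) (f : NormStrategy) : Prop :=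
  properNStrat Alph P φ f ∧
  ∀ bs, NormExec Alph P φ bs → nCompatible f bs → nMaximal Alph P φ f bs →
    SatS P (Exec.fin bs.flatten) φ

/-- `NWin(φ)`. -/
def NWin (Alph : Alphabet) (φ : FO) : Set Tok :=
  { k | ∃ P : ProcTriple,
      P.Ps.card = k.1 ∧ P.Pe.card = k.2.1 ∧ P.Pse.card = k.2.2 ∧
      ∃ f : NormStrategy, winningNStrategy Alph P φ f }

/-! ### Concrete alphabet and formulas of the examples -/

/-- The alphabet with `A_s = {a, b} = {0, 1}` and `A_e = {c, d} = {2, 3}`. -/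
def alph4 : Alphabet := ⟨4, fun a => decide (a < 2)⟩

/-- `φ_1 = ∀x.((s(x) ∨ se(x)) → ∃y.(x∼y ∧ (a(y) ∨ b(y))))`. -/
def phi1 : FO :=
  FO.all 0 (FO.imp (FO.or (FO.ptype .s 0) (FO.ptype .se 0))
    (FO.ex 1 (FO.and (FO.sim 0 1) (FO.or (FO.letter 0 1) (FO.letter 1 1)))))

/-- `φ_4 = ∀x.((∃^{=2}y.(x∼y ∧ a(y))) ↔ (∃^{=2}y.(x∼y ∧ d(y))))`. -/
def phi4 : FO :=
  FO.all 0 (FO.iff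
    (exEq 2 1 fun y => FO.and (FO.sim 0 y) (FO.letter 0 y))
    (exEq 2 1 fun y => FO.and (FO.sim 0 y) (FO.letter 3 y)))

/-- Vectors `{0,…,3}^{4}` as functions `ℕ → ℕ`. -/
def vec4 (v0 v1 v2 v3 : ℕ) : ℕ → ℕ := fun i => [v0, v1, v2, v3].getD i 0

def allVecs4 : List (ℕ → ℕ) :=
  (List.range 4).flatMap fun v0 =>
    (List.range 4).flatMap fun v1 =>
      (List.range 4).flatMap fun v2 =>
        (List.range 4).map fun v3 => vec4 v0 v1 v2 v3

/-- `Z`: vectors with `ℓ(a) = 2 ≠ ℓ(d)` or `ℓ(d) = 2 ≠ ℓ(a)` (letters `a = 0`, `d = 3`). -/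
def Zvecs : List (ℕ → ℕ) :=
  allVecs4.filter fun ℓ => decide ((ℓ 0 = 2 ∧ ℓ 3 ≠ 2) ∨ (ℓ 3 = 2 ∧ ℓ 0 ≠ 2))

/-- `φ_4' = ⋀_{θ ∈ T, ℓ ∈ Z} ∃^{=0} y.(θ(y) ∧ ψ_{3,ℓ}(y))`. -/
def phi4' : FO :=
  bigAnd (([PType.s, PType.e, PType.se].flatMap fun θ =>
    Zvecs.map fun ℓ => nfAtom 4 3 true 0 θ ℓ))

/-! ### Effective encodings of inputs (for decidability statements) -/

def decodePType (k : ℕ) : PType :=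
  if k % 3 = 0 then .s else if k % 3 = 1 then .e else .se

/-- Surjective decoding of formulas from naturals (with fuel). -/
def decodeFOAux : ℕ → ℕ → FO
  | 0, _ => FO.eq 0 0
  | fuel + 1, c =>
    let t := c % 9
    let m := c / 9
    let a := m.unpair.1
    let b := m.unpair.2
    if t = 0 then FO.ptype (decodePType a) b
    else if t = 1 then FO.letter a b
    else if t = 2 then FO.eq a b
    else if t = 3 then FO.sim a b
    else if t = 4 then FO.lt a b
    else if t = 5 then FO.succ a b
    else if t = 6 then FO.not (decodeFOAux fuel m)
    else if t = 7 then FO.or (decodeFOAux fuel a) (decodeFOAux fuel b)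
    else FO.ex a (decodeFOAux fuel b)

def decodeFO (c : ℕ) : FO := decodeFOAux c c

/-- Decoding an input of the synthesis/satisfiability problems: an alphabet
(size and partition) together with a formula. -/
def decodeFOInput (c : ℕ) : Alphabet × FO :=
  (⟨c.unpair.1.unpair.1, fun a => (c.unpair.1.unpair.2).testBit a⟩, decodeFO c.unpair.2)

def decodeBN (m : ℕ) : Bool × ℕ := (decide (m % 2 = 0), m / 2)

def decodeLCond (m : ℕ) : LCond :=
  (decodeBN m.unpair.1, decodeBN m.unpair.2.unpair.1, decodeBN m.unpair.2.unpair.2)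

/-- An explicit index of a location, used to decode local acceptance conditions. -/
def locIndex {n B : ℕ} (ℓ : Loc n B) : ℕ := ∑ i : Fin n, (ℓ i : ℕ) * (B + 1) ^ (i : ℕ)

/-- Decoding a parameterized vector game from a natural number. -/
def decodeGame (c : ℕ) : PVG :=
  let n := c.unpair.1.unpair.1
  let sy := c.unpair.1.unpair.2
  let B := c.unpair.2.unpair.1
  let Fc := c.unpair.2.unpair.2
  { Alph := ⟨n, fun a => sy.testBit a⟩
    B := B
    F := (Denumerable.ofNat (List ℕ) Fc).map fun kc =>
      fun ℓ => decodeLCond ((Denumerable.ofNat (List ℕ) kc).getD (locIndex ℓ) 0) }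


/-! ### Auxiliary development for the normal form theorem -/

instance : Fintype PType :=
  ⟨{.s, .e, .se}, by intro x; cases x <;> simp⟩

open Classical in
/-- The type of a process (if it belongs to `P.all`). -/
noncomputable def typeOfProc (P : ProcTriple) (p : ℕ) : Option PType :=
  if p ∈ P.Ps then some .s else if p ∈ P.Pe then some .e
  else if p ∈ P.Pse then some .se else none

lemma mem_ofType_iff {P : ProcTriple} {p : ℕ} {θ : PType} :
    p ∈ P.ofType θ ↔ typeOfProc P p = some θ := by
  classical
  have d1 : p ∈ P.Ps → p ∉ P.Pe := fun h => Finset.disjoint_left.mp P.disj_se h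
  have d2 : p ∈ P.Ps → p ∉ P.Pse := fun h => Finset.disjoint_left.mp P.disj_sse h
  have d3 : p ∈ P.Pe → p ∉ P.Pse := fun h => Finset.disjoint_left.mp P.disj_ese h
  by_cases h1 : p ∈ P.Ps <;> by_cases h2 : p ∈ P.Pe <;> by_cases h3 : p ∈ P.Pse <;>
    cases θ <;> simp_all [ProcTriple.ofType, typeOfProc]

lemma typeOfProc_isSome_of_mem_all {P : ProcTriple} {p : ℕ} (h : p ∈ P.all) :
    (typeOfProc P p).isSome := by
  classical
  rcases Finset.mem_union.1 h with h' | h3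
  · rcases Finset.mem_union.1 h' with h1 | h2
    · simp [typeOfProc, h1]
    · by_cases h1 : p ∈ P.Ps <;> simp [typeOfProc, h1, h2]
  · by_cases h1 : p ∈ P.Ps <;> by_cases h2 : p ∈ P.Pe <;>
      simp [typeOfProc, h1, h2, h3]

lemma mem_all_of_typeOfProc {P : ProcTriple} {p : ℕ} {θ : PType}
    (h : typeOfProc P p = some θ) : p ∈ P.all := by
  classical
  by_cases h1 : p ∈ P.Ps
  · exact Finset.mem_union.2 (Or.inl (Finset.mem_union.2 (Or.inl h1)))
  by_cases h2 : p ∈ P.Pe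
  · exact Finset.mem_union.2 (Or.inl (Finset.mem_union.2 (Or.inr h2)))
  by_cases h3 : p ∈ P.Pse
  · exact Finset.mem_union.2 (Or.inr h3)
  · simp [typeOfProc, h1, h2, h3] at h

/-- The set of positions of `w` carrying letter `a` and executed by `p`. -/
def PosSet (w : Exec) (a p : ℕ) : Set ℕ := {i | w.at? i = some (a, p)}

lemma posDom_of_at? {w : Exec} {i : ℕ} {σ : Event} (h : w.at? i = some σ) :
    w.posDom i := by
  cases w with
  | fin l =>
    simp only [Exec.at?] at h
    exact (List.getElem?_eq_some_iff.1 h).1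
  | inf g => trivial

lemma at?_isSome_of_posDom {w : Exec} {i : ℕ} (h : w.posDom i) :
    (w.at? i).isSome := by
  cases w with
  | fin l =>
    simp only [Exec.posDom] at h
    simp [Exec.at?, List.getElem?_eq_getElem h]
  | inf g => simp [Exec.at?]

lemma at?_isEvent {Alph : Alphabet} {P : ProcTriple} {w : Exec} (hv : w.valid Alph P)
    {i : ℕ} {σ : Event} (h : w.at? i = some σ) : isEvent Alph P σ := by
  cases w with
  | fin l =>
    simp only [Exec.at?] at h
    exact hv σ (List.mem_of_getElem? h)
  | inf g =>
    simp only [Exec.at?, Option.some_inj] at h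
    exact h ▸ hv i

lemma event_proc_mem_all {Alph : Alphabet} {P : ProcTriple} {σ : Event}
    (h : isEvent Alph P σ) : σ.2 ∈ P.all := by
  rcases h with ⟨-, -, h | h⟩ | ⟨-, -, h | h⟩
  · exact Finset.mem_union.2 (Or.inl (Finset.mem_union.2 (Or.inl h)))
  · exact Finset.mem_union.2 (Or.inr h)
  · exact Finset.mem_union.2 (Or.inl (Finset.mem_union.2 (Or.inr h)))
  · exact Finset.mem_union.2 (Or.inr h)

lemma procOf_isSome_of_dom {P : ProcTriple} {w : Exec} {e : Elem}
    (h : elemDom P w e) : (procOf w e).isSome := by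
  cases e with
  | inl p => simp [procOf]
  | inr i =>
    have := at?_isSome_of_posDom (w := w) h
    simp [procOf, Option.isSome_map]
    exact this

lemma procOf_mem_all {Alph : Alphabet} {P : ProcTriple} {w : Exec}
    (hv : w.valid Alph P) {e : Elem} {q : ℕ}
    (hd : elemDom P w e) (h : procOf w e = some q) : q ∈ P.all := by
  cases e with
  | inl p =>
    simp only [procOf, Option.some_inj] at h
    exact h ▸ hd
  | inr i =>
    simp only [procOf, Option.map_eq_some_iff] at h
    rcases h with ⟨σ, hσ, rfl⟩
    exact event_proc_mem_all (at?_isEvent hv hσ)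

open Classical in
/-- Capped (at `B`) number of positions of `w` labelled `(a, p)`. -/
noncomputable def ccnt (B : ℕ) (w : Exec) (a p : ℕ) : ℕ :=
  if h : (PosSet w a p).Finite then min B h.toFinset.card else B

lemma ccnt_le (B : ℕ) (w : Exec) (a p : ℕ) : ccnt B w a p ≤ B := by
  unfold ccnt; split <;> simp

/-- `S` contains at least `m` elements. -/
def hasGe {α : Type} (m : ℕ) (S : Set α) : Prop :=
  ∃ T : Finset α, T.card = m ∧ ↑T ⊆ S

lemma hasGe_of_le_ccnt {B w a p m} (h : m ≤ ccnt B w a p) :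
    hasGe m (PosSet w a p) := by
  unfold ccnt at h
  split at h
  · next hf =>
    obtain ⟨T, hT, hcard⟩ := Finset.exists_subset_card_eq
      (le_trans h (min_le_right _ _))
    exact ⟨T, hcard, fun x hx => hf.mem_toFinset.1 (hT hx)⟩
  · next hf =>
    obtain ⟨T, hTs, hT⟩ := Set.Infinite.exists_subset_card_eq hf m
    exact ⟨T, hT, hTs⟩

lemma le_ccnt_of_hasGe {B w a p m} (h : hasGe m (PosSet w a p)) (hm : m ≤ B) :
    m ≤ ccnt B w a p := by
  obtain ⟨T, hcard, hsub⟩ := h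
  unfold ccnt
  split
  · next hf =>
    refine le_min hm ?_
    rw [← hcard]
    exact Finset.card_le_card (fun x hx => hf.mem_toFinset.2 (hsub hx))
  · exact hm

lemma exists_fresh_pos {B w a p} (U : Finset ℕ) (h : U.card < ccnt B w a p) :
    ∃ i ∈ PosSet w a p, i ∉ U := by
  unfold ccnt at h
  split at h
  · next hf =>
    have h2 : U.card < hf.toFinset.card := lt_of_lt_of_le h (min_le_right _ _)
    have : (hf.toFinset \ U).Nonempty := by
      rw [← Finset.card_pos]
      have := Finset.le_card_sdiff U hf.toFinset
      omega
    obtain ⟨i, hi⟩ := this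
    rw [Finset.mem_sdiff] at hi
    exact ⟨i, hf.mem_toFinset.1 hi.1, hi.2⟩
  · next hf =>
    obtain ⟨i, hi⟩ := (Set.Infinite.diff (hf : (PosSet w a p).Infinite) (U.finite_toSet)).nonempty
    exact ⟨i, hi.1, fun hc => hi.2 hc⟩

lemma hasGe_image {α β : Type} {f : α → β} (hf : Function.Injective f)
    (m : ℕ) (S : Set α) : hasGe m (f '' S) ↔ hasGe m S := by
  classical
  constructor
  · rintro ⟨T, hcard, hsub⟩
    have hmem : ∀ u ∈ T, ∃ x, x ∈ S ∧ f x = u := fun u hu => by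
      rcases hsub hu with ⟨x, hx, hfx⟩; exact ⟨x, hx, hfx⟩
    choose g hg hfg using hmem
    refine ⟨T.attach.image (fun u => g u.1 u.2), ?_, ?_⟩
    · rw [Finset.card_image_of_injective _ ?_, Finset.card_attach, hcard]
      intro u v huv
      have h2 : f (g u.1 u.2) = f (g v.1 v.2) := congrArg f huv
      rw [hfg, hfg] at h2
      exact Subtype.ext h2
    · intro x hx
      simp only [Finset.coe_image, Set.mem_image] at hx
      rcases hx with ⟨u, hu, rfl⟩
      exact hg u.1 u.2
  · rintro ⟨T, hcard, hsub⟩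
    exact ⟨T.image f, by rw [Finset.card_image_of_injective _ hf, hcard],
      by intro x hx; simp only [Finset.coe_image] at hx;
         rcases hx with ⟨y, hy, rfl⟩; exact ⟨y, hsub hy, rfl⟩⟩

lemma hasGe_coe_finset {α : Type} (m : ℕ) (T : Finset α) :
    hasGe m (↑T : Set α) ↔ m ≤ T.card := by
  classical
  constructor
  · rintro ⟨U, hcard, hsub⟩
    rw [← hcard]
    exact Finset.card_le_card (fun x hx => hsub hx)
  · intro h
    obtain ⟨U, hU, hcard⟩ := Finset.exists_subset_card_eq h
    exact ⟨U, hcard, fun x hx => hU hx⟩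

lemma hasGe_congr {α : Type} (m : ℕ) {S S' : Set α} (h : S = S') :
    hasGe m S ↔ hasGe m S' := by rw [h]

/-- Exact/at-least count conditions vs the capped count `ccnt`. -/
lemma ccnt_eq_iff_lt {B w a p c} (hc : c < B) :
    ccnt B w a p = c ↔ (hasGe c (PosSet w a p) ∧ ¬ hasGe (c + 1) (PosSet w a p)) := by
  constructor
  · intro h
    refine ⟨hasGe_of_le_ccnt (h.ge), fun hge => ?_⟩
    have := le_ccnt_of_hasGe (B := B) (m := c+1) hge (by omega)
    omega
  · rintro ⟨h1, h2⟩
    have hle := le_ccnt_of_hasGe (B := B) (m := c) h1 (by omega)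
    by_contra hne
    have hlt : c + 1 ≤ ccnt B w a p := by
      have := ccnt_le B w a p
      omega
    exact h2 (hasGe_of_le_ccnt hlt)

lemma ccnt_eq_iff_eq {B w a p} :
    ccnt B w a p = B ↔ hasGe B (PosSet w a p) := by
  constructor
  · intro h; exact hasGe_of_le_ccnt h.ge
  · intro h
    have := le_ccnt_of_hasGe h le_rfl
    have := ccnt_le B w a p
    omega

open Classical in
/-- The classes (processes) of type `θ` whose capped letter counts agree with `ℓ`
on all letters `< n`. -/
noncomputable def clsSet (n B : ℕ) (P : ProcTriple) (w : Exec) (θ : PType)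
    (ℓ : ℕ → ℕ) : Finset ℕ :=
  P.all.filter (fun p => typeOfProc P p = some θ ∧ ∀ a < n, ccnt B w a p = ℓ a)

lemma clsSet_congr {n B P w θ} {ℓ ℓ' : ℕ → ℕ} (h : ∀ a < n, ℓ a = ℓ' a) :
    clsSet n B P w θ ℓ = clsSet n B P w θ ℓ' := by
  classical
  unfold clsSet
  apply Finset.filter_congr
  intro p _
  constructor
  · rintro ⟨h1, h2⟩
    exact ⟨h1, fun a ha => (h2 a ha).trans (h a ha)⟩
  · rintro ⟨h1, h2⟩
    exact ⟨h1, fun a ha => (h2 a ha).trans (h a ha).symm⟩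

/-- Equality of capped class-count profiles. -/
def profEq (n B : ℕ) (P : ProcTriple) (w : Exec) (P' : ProcTriple) (w' : Exec) : Prop :=
  ∀ (θ : PType) (ℓ : ℕ → ℕ),
    min B (clsSet n B P w θ ℓ).card = min B (clsSet n B P' w' θ ℓ).card

/-! ### Basic lemmas about satisfaction -/

lemma sat_congr {P : ProcTriple} {w : Exec} (φ : FO) :
    ∀ {v v' : ℕ → Elem}, (∀ x ∈ φ.free, v x = v' x) →
    (Sat P w v φ ↔ Sat P w v' φ) := by
  induction φ with
  | ptype θ x => intro v v' h; simp [Sat, h x (by simp [FO.free])]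
  | letter a x => intro v v' h; simp [Sat, h x (by simp [FO.free])]
  | eq x y => intro v v' h
              simp [Sat, h x (by simp [FO.free]), h y (by simp [FO.free])]
  | sim x y => intro v v' h
               simp [Sat, h x (by simp [FO.free]), h y (by simp [FO.free])]
  | lt x y => intro v v' h
              simp [Sat, h x (by simp [FO.free]), h y (by simp [FO.free])]
  | succ x y => intro v v' h
                simp [Sat, h x (by simp [FO.free]), h y (by simp [FO.free])]
  | not φ ih => intro v v' h; simp only [Sat]; rw [ih h]
  | or φ ψ ih1 ih2 =>
      intro v v' h
      simp only [Sat]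
      rw [ih1 (fun x hx => h x (by simp [FO.free, hx])),
        ih2 (fun x hx => h x (by simp [FO.free, hx]))]
  | ex x φ ih =>
      intro v v' h
      simp only [Sat]
      constructor <;> rintro ⟨u, hu, hsat⟩ <;> refine ⟨u, hu, ?_⟩
      · rw [← ih (v := Function.update v x u)]; · exact hsat
        intro y hy
        by_cases hxy : y = x
        · subst hxy; simp
        · simp only [Function.update_of_ne hxy]
          exact h y (by simp [FO.free, hy, hxy]) |>.symm ▸ rfl
      · rw [ih (v' := Function.update v' x u)]; · exact hsat
        intro y hy
        by_cases hxy : y = x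
        · subst hxy; simp
        · simp only [Function.update_of_ne hxy]
          exact h y (by simp [FO.free, hy, hxy])

lemma sat_and {P w v} {φ ψ : FO} :
    Sat P w v (FO.and φ ψ) ↔ Sat P w v φ ∧ Sat P w v ψ := by
  simp only [FO.and, Sat]; tauto

lemma sat_not {P w v} {φ : FO} : Sat P w v (FO.not φ) ↔ ¬ Sat P w v φ := Iff.rfl

lemma sat_trueFO {P w v} : Sat P w v trueFO := by simp [trueFO, Sat]

lemma sat_bigAnd {P w v} {l : List FO} :
    Sat P w v (bigAnd l) ↔ ∀ ψ ∈ l, Sat P w v ψ := by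
  induction l with
  | nil => simpa [bigAnd] using sat_trueFO
  | cons φ l ih =>
      simp only [bigAnd, List.foldr_cons]
      rw [show (List.foldr FO.and trueFO l) = bigAnd l from rfl] at *
      rw [sat_and, ih]
      simp

lemma sat_bigOr {P w v} {l : List FO} :
    Sat P w v (bigOr l) ↔ ∃ ψ ∈ l, Sat P w v ψ := by
  induction l with
  | nil => simp [bigOr, Sat, sat_trueFO]
  | cons φ l ih =>
      simp only [bigOr, List.foldr_cons]
      rw [show (List.foldr FO.or (FO.not trueFO) l) = bigOr l from rfl] at *
      simp only [Sat, ih]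
      simp

/-- Simultaneous update of a valuation. -/
def updM (v : ℕ → Elem) : List ℕ → List Elem → ℕ → Elem
  | x :: xs, u :: us => updM (Function.update v x u) xs us
  | _, _ => v

lemma updM_notMem : ∀ (xs : List ℕ) (us : List Elem) (v : ℕ → Elem) (y : ℕ),
    y ∉ xs → updM v xs us y = v y := by
  intro xs
  induction xs with
  | nil => intro us v y _; cases us <;> rfl
  | cons x xs ih =>
      intro us v y hy
      cases us with
      | nil => rfl
      | cons u us =>
          simp only [updM]
          rw [ih _ _ _ (fun h => hy (List.mem_cons.2 (Or.inr h)))]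
          exact Function.update_of_ne (fun h => hy (by simp [h])) _ _

lemma updM_getElem : ∀ (xs : List ℕ) (us : List Elem) (v : ℕ → Elem) (i : ℕ)
    (hi : i < xs.length) (hn : xs.Nodup) (hl : us.length = xs.length),
    updM v xs us (xs[i]) = us[i]'(by omega) := by
  intro xs
  induction xs with
  | nil => intro us v i hi; simp at hi
  | cons x xs ih =>
      intro us v i hi hn hl
      cases us with
      | nil => simp at hl
      | cons u us =>
          cases i with
          | zero =>
              simp only [List.getElem_cons_zero, updM]
              rw [updM_notMem _ _ _ _ (by simp at hn; exact hn.1)]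
              simp
          | succ i =>
              simp only [List.getElem_cons_succ, updM]
              exact ih us _ i (by simpa using hi) (by simp at hn; exact hn.2)
                (by simpa using hl)

lemma sat_foldr_ex {P : ProcTriple} {w : Exec} (ψ : FO) :
    ∀ (xs : List ℕ) (v : ℕ → Elem),
    Sat P w v (xs.foldr FO.ex ψ) ↔
      ∃ us : List Elem, us.length = xs.length ∧ (∀ u ∈ us, elemDom P w u) ∧
        Sat P w (updM v xs us) ψ := by
  intro xs
  induction xs with
  | nil =>
      intro v
      constructor
      · intro h; exact ⟨[], rfl, by simp, h⟩
      · rintro ⟨us, hlen, -, h⟩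
        cases us
        · exact h
        · simp at hlen
  | cons x xs ih =>
      intro v
      simp only [List.foldr_cons, Sat]
      constructor
      · rintro ⟨u, hu, hsat⟩
        obtain ⟨us, hlen, hdom, hsat'⟩ := (ih _).1 hsat
        exact ⟨u :: us, by simp [hlen], by
          intro z hz; rcases List.mem_cons.1 hz with rfl | hz
          exacts [hu, hdom z hz], hsat'⟩
      · rintro ⟨us, hlen, hdom, hsat⟩
        cases us with
        | nil => simp at hlen
        | cons u us =>
            refine ⟨u, hdom u (by simp), ?_⟩
            exact (ih _).2 ⟨us, by simpa using hlen,
              fun z hz => hdom z (by simp [hz]), hsat⟩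

/-! ### Semantics of the counting quantifiers -/

lemma sat_exGe {P : ProcTriple} {w : Exec} (v : ℕ → Elem) (m base : ℕ)
    (mk : ℕ → FO) (Q : Elem → Prop)
    (Huni : ∀ x, base ≤ x → ∀ v₂ : ℕ → Elem, (∀ y, y < base → v₂ y = v y) →
      (Sat P w v₂ (mk x) ↔ Q (v₂ x))) :
    Sat P w v (exGe m base mk) ↔ hasGe m {u : Elem | elemDom P w u ∧ Q u} := by
  classical
  set xs : List ℕ := (List.range m).map (base + ·) with hxs
  have hlen : xs.length = m := by simp [hxs]
  have hnodup : xs.Nodup := List.Nodup.map (fun a b h => by omega) (List.nodup_range (n := m))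
  have hget : ∀ i (hi : i < m), xs[i]'(by omega) = base + i := by
    intro i hi; simp [hxs]
  have hnotmem : ∀ y, y < base → y ∉ xs := by
    intro y hy hmem
    simp only [hxs, List.mem_map, List.mem_range] at hmem
    omega
  have hupd : ∀ (us : List Elem) (hul : us.length = m), ∀ i (hi : i < m),
      updM v xs us (base + i) = us[i]'(by rw [hul]; exact hi) := by
    intro us hul i hi
    rw [← hget i hi]
    exact updM_getElem xs us v i (by omega) hnodup (by omega)
  have hbody : exGe m base mk =
      xs.foldr FO.ex (FO.and (bigAnd ((List.range m).flatMap fun i =>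
        ((List.range m).filter fun j => decide (i < j)).map fun j =>
          FO.not (FO.eq (base + i) (base + j))))
        (bigAnd ((List.range m).map fun i => mk (base + i)))) := rfl
  rw [hbody, sat_foldr_ex]
  constructor
  · rintro ⟨us, hulen, hdom, hsat⟩
    rw [hlen] at hulen
    rw [sat_and, sat_bigAnd, sat_bigAnd] at hsat
    obtain ⟨hdis, hmk⟩ := hsat
    have hQ : ∀ i (hi : i < m), Q (us[i]'(by omega)) := by
      intro i hi
      have h1 := hmk (mk (base + i))
        (by simp only [List.mem_map, List.mem_range]; exact ⟨i, hi, rfl⟩)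
      rw [Huni (base + i) (by omega) (updM v xs us)
        (fun y hy => updM_notMem _ _ _ _ (hnotmem y hy))] at h1
      rwa [hupd us hulen i hi] at h1
    have hne : ∀ i j (hi : i < m) (hj : j < m), i < j →
        us[i]'(by omega) ≠ us[j]'(by omega) := by
      intro i j hi hj hij hc
      have h1 := hdis (FO.not (FO.eq (base + i) (base + j))) (by
        simp only [List.mem_flatMap, List.mem_map, List.mem_filter, List.mem_range,
          decide_eq_true_eq]
        exact ⟨i, hi, j, ⟨hj, hij⟩, rfl⟩)
      simp only [Sat] at h1
      apply h1
      rw [hupd us hulen i hi, hupd us hulen j hj]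
      exact hc
    have husnodup : us.Nodup :=
      List.pairwise_iff_getElem.2 (fun i j hi hj hij =>
        hne i j (by omega) (by omega) hij)
    refine ⟨us.toFinset, by rw [List.toFinset_card_of_nodup husnodup, hulen], ?_⟩
    intro u hu
    rw [Finset.mem_coe, List.mem_toFinset, List.mem_iff_getElem] at hu
    obtain ⟨i, hi, rfl⟩ := hu
    exact ⟨hdom _ (List.getElem_mem _), hQ i (by omega)⟩
  · rintro ⟨T, hcard, hsub⟩
    refine ⟨T.toList, by rw [Finset.length_toList, hcard, hlen], ?_, ?_⟩
    · intro u hu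
      exact (hsub (by rwa [Finset.mem_coe, ← Finset.mem_toList])).1
    · have hul : T.toList.length = m := by rw [Finset.length_toList, hcard]
      rw [sat_and, sat_bigAnd, sat_bigAnd]
      constructor
      · intro ψ hψ
        simp only [List.mem_flatMap, List.mem_map, List.mem_filter, List.mem_range,
          decide_eq_true_eq] at hψ
        obtain ⟨i, hi, j, ⟨hj, hij⟩, rfl⟩ := hψ
        simp only [Sat]
        rw [hupd T.toList hul i hi, hupd T.toList hul j hj]
        intro hc
        have h2 : (⟨i, by omega⟩ : Fin T.toList.length) = ⟨j, by omega⟩ :=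
          List.nodup_iff_injective_getElem.1 T.nodup_toList hc
        simp only [Fin.mk.injEq] at h2
        omega
      · intro ψ hψ
        simp only [List.mem_map, List.mem_range] at hψ
        obtain ⟨i, hi, rfl⟩ := hψ
        rw [Huni (base + i) (by omega) (updM v xs T.toList)
          (fun y hy => updM_notMem _ _ _ _ (hnotmem y hy))]
        rw [hupd T.toList hul i hi]
        refine (hsub ?_).2
        rw [Finset.mem_coe, ← Finset.mem_toList]
        exact List.getElem_mem _

lemma sat_exEq {P : ProcTriple} {w : Exec} (v : ℕ → Elem) (m base : ℕ)
    (mk : ℕ → FO) (Q : Elem → Prop)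
    (Huni : ∀ x, base ≤ x → ∀ v₂ : ℕ → Elem, (∀ y, y < base → v₂ y = v y) →
      (Sat P w v₂ (mk x) ↔ Q (v₂ x))) :
    Sat P w v (exEq m base mk) ↔
      (hasGe m {u : Elem | elemDom P w u ∧ Q u} ∧
       ¬ hasGe (m + 1) {u : Elem | elemDom P w u ∧ Q u}) := by
  unfold exEq
  rw [sat_and, sat_not, sat_exGe v m base mk Q Huni, sat_exGe v (m+1) base mk Q Huni]

lemma domQ_eq_posSet {P : ProcTriple} {w : Exec} (a p : ℕ) :
    {u : Elem | elemDom P w u ∧ procOf w u = some p ∧ letterOf w u = some a}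
      = Sum.inr '' PosSet w a p := by
  ext u
  cases u with
  | inl q => simp [letterOf]
  | inr i =>
      simp only [Set.mem_setOf_eq, Set.mem_image]
      constructor
      · rintro ⟨hdom, hproc, hlet⟩
        simp only [procOf, letterOf, Option.map_eq_some_iff] at hproc hlet
        obtain ⟨σ, hσ, hp2⟩ := hproc
        obtain ⟨σ', hσ', hp1⟩ := hlet
        rw [hσ] at hσ'
        obtain rfl := Option.some_inj.1 hσ'
        refine ⟨i, ?_, rfl⟩
        show w.at? i = some (a, p)
        rw [hσ]
        congr 1
        exact Prod.ext hp1 hp2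
      · rintro ⟨j, hj, hji⟩
        obtain rfl := Sum.inr_injective hji
        have hat : w.at? j = some (a, p) := hj
        exact ⟨posDom_of_at? hat, by simp [procOf, hat], by simp [letterOf, hat]⟩

lemma sat_psiCount {P : ProcTriple} {w : Exec} {v : ℕ → Elem} {n B : ℕ}
    {ℓ : ℕ → ℕ} {y p : ℕ}
    (hp : procOf w (v y) = some p) (hB : ∀ a < n, ℓ a ≤ B) :
    Sat P w v (psiCount n B ℓ y) ↔ ∀ a < n, ccnt B w a p = ℓ a := by
  unfold psiCount
  rw [sat_bigAnd]
  constructor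
  · intro h a ha
    have hm := h _ (by simp only [List.mem_map, List.mem_range]; exact ⟨a, ha, rfl⟩)
    have huni : ∀ x, y + 1 ≤ x → ∀ v₂ : ℕ → Elem, (∀ z, z < y + 1 → v₂ z = v z) →
        (Sat P w v₂ (FO.and (FO.sim y x) (FO.letter a x)) ↔
          (procOf w (v₂ x) = some p ∧ letterOf w (v₂ x) = some a)) := by
      intro x hx v₂ hlow
      rw [sat_and]
      simp only [Sat]
      rw [hlow y (by omega), hp]
      simp only [Option.isSome_some, true_and]
      constructor
      · rintro ⟨h1, h2⟩; exact ⟨h1.symm, h2⟩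
      · rintro ⟨h1, h2⟩; exact ⟨h1.symm, h2⟩
    by_cases hlt : ℓ a < B
    · rw [if_pos hlt] at hm
      rw [sat_exEq v (ℓ a) (y+1) _ (fun u => procOf w u = some p ∧ letterOf w u = some a) huni] at hm
      rw [ccnt_eq_iff_lt hlt]
      rwa [domQ_eq_posSet a p, hasGe_image Sum.inr_injective,
        hasGe_image Sum.inr_injective] at hm
    · rw [if_neg hlt] at hm
      have hla : ℓ a = B := le_antisymm (hB a ha) (by omega)
      rw [sat_exGe v (ℓ a) (y+1) _ (fun u => procOf w u = some p ∧ letterOf w u = some a) huni] at hm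
      rw [hla, ccnt_eq_iff_eq]
      rw [domQ_eq_posSet a p, hasGe_image Sum.inr_injective] at hm
      rwa [hla] at hm
  · intro h ψ hψ
    simp only [List.mem_map, List.mem_range] at hψ
    obtain ⟨a, ha, rfl⟩ := hψ
    have huni : ∀ x, y + 1 ≤ x → ∀ v₂ : ℕ → Elem, (∀ z, z < y + 1 → v₂ z = v z) →
        (Sat P w v₂ (FO.and (FO.sim y x) (FO.letter a x)) ↔
          (procOf w (v₂ x) = some p ∧ letterOf w (v₂ x) = some a)) := by
      intro x hx v₂ hlow
      rw [sat_and]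
      simp only [Sat]
      rw [hlow y (by omega), hp]
      simp only [Option.isSome_some, true_and]
      constructor
      · rintro ⟨h1, h2⟩; exact ⟨h1.symm, h2⟩
      · rintro ⟨h1, h2⟩; exact ⟨h1.symm, h2⟩
    by_cases hlt : ℓ a < B
    · rw [if_pos hlt, sat_exEq v (ℓ a) (y+1) _ (fun u => procOf w u = some p ∧ letterOf w u = some a) huni, domQ_eq_posSet a p,
        hasGe_image Sum.inr_injective, hasGe_image Sum.inr_injective,
        ← ccnt_eq_iff_lt hlt]
      exact h a ha
    · have hla : ℓ a = B := le_antisymm (hB a ha) (by omega)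
      rw [if_neg hlt, sat_exGe v (ℓ a) (y+1) _ (fun u => procOf w u = some p ∧ letterOf w u = some a) huni, domQ_eq_posSet a p,
        hasGe_image Sum.inr_injective, hla, ← ccnt_eq_iff_eq]
      exact (h a ha).trans hla

lemma sat_nfAtom {P : ProcTriple} {w : Exec} {v : ℕ → Elem} {n B : ℕ}
    {isEq : Bool} {m : ℕ} {θ : PType} {ℓ : ℕ → ℕ} (hB : ∀ a < n, ℓ a ≤ B) :
    Sat P w v (nfAtom n B isEq m θ ℓ) ↔
      (if isEq then (clsSet n B P w θ ℓ).card = m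
       else m ≤ (clsSet n B P w θ ℓ).card) := by
  classical
  have huni : ∀ x, 0 ≤ x → ∀ v₂ : ℕ → Elem, (∀ z, z < 0 → v₂ z = v z) →
      (Sat P w v₂ (FO.and (FO.ptype θ x) (psiCount n B ℓ x)) ↔
        (∃ p, v₂ x = Sum.inl p ∧ p ∈ clsSet n B P w θ ℓ)) := by
    intro x _ v₂ _
    rw [sat_and]
    constructor
    · rintro ⟨h1, h2⟩
      simp only [Sat] at h1
      obtain ⟨p, hxp, hθ⟩ := h1
      have hproc : procOf w (v₂ x) = some p := by rw [hxp]; rfl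
      rw [sat_psiCount hproc hB] at h2
      refine ⟨p, hxp, ?_⟩
      rw [clsSet, Finset.mem_filter]
      exact ⟨mem_all_of_typeOfProc (mem_ofType_iff.1 hθ), mem_ofType_iff.1 hθ, h2⟩
    · rintro ⟨p, hxp, hmem⟩
      rw [clsSet, Finset.mem_filter] at hmem
      obtain ⟨hall, hθ, hcnt⟩ := hmem
      have hproc : procOf w (v₂ x) = some p := by rw [hxp]; rfl
      constructor
      · exact ⟨p, hxp, mem_ofType_iff.2 hθ⟩
      · rw [sat_psiCount hproc hB]
        exact hcnt
  have hset : {u : Elem | elemDom P w u ∧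
      (∃ p, u = Sum.inl p ∧ p ∈ clsSet n B P w θ ℓ)}
      = Sum.inl '' (↑(clsSet n B P w θ ℓ) : Set ℕ) := by
    ext u
    simp only [Set.mem_setOf_eq, Set.mem_image, Finset.mem_coe]
    constructor
    · rintro ⟨-, p, rfl, hp⟩; exact ⟨p, hp, rfl⟩
    · rintro ⟨p, hp, rfl⟩
      refine ⟨?_, p, rfl, hp⟩
      have := (Finset.mem_filter.1 hp).1
      exact this
  unfold nfAtom
  cases isEq with
  | true =>
      rw [if_pos rfl, if_pos rfl]
      rw [sat_exEq v m 0 _ (fun u => ∃ p, u = Sum.inl p ∧ p ∈ clsSet n B P w θ ℓ) huni, hset, hasGe_image Sum.inl_injective,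
        hasGe_image Sum.inl_injective, hasGe_coe_finset, hasGe_coe_finset]
      omega
  | false =>
      rw [if_neg (by simp), if_neg (by simp)]
      rw [sat_exGe v m 0 _ (fun u => ∃ p, u = Sum.inl p ∧ p ∈ clsSet n B P w θ ℓ) huni, hset, hasGe_image Sum.inl_injective,
        hasGe_coe_finset]

/-! ### Partial isomorphisms and invariance under profile equality -/

/-- The number of quantifiers along a branch. -/
def rank : FO → ℕ
  | .not φ => rank φ
  | .or φ ψ => max (rank φ) (rank ψ)
  | .ex _ φ => rank φ + 1
  | _ => 0

/-- A partial isomorphism between the structures of `(P,w)` and `(P',w')`,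
preserving kinds, letters, class types, capped class letter-counts, equality
and the `∼`-pattern. -/
structure PIso (n k : ℕ) (P : ProcTriple) (w : Exec) (P' : ProcTriple) (w' : Exec)
    (F : List (Elem × Elem)) : Prop where
  dom1 : ∀ pr ∈ F, elemDom P w pr.1
  dom2 : ∀ pr ∈ F, elemDom P' w' pr.2
  kind : ∀ pr ∈ F, pr.1.isLeft = pr.2.isLeft
  lett : ∀ pr ∈ F, letterOf w pr.1 = letterOf w' pr.2
  ptyp : ∀ pr ∈ F, (procOf w pr.1).bind (fun p => typeOfProc P p)
            = (procOf w' pr.2).bind (fun p => typeOfProc P' p)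
  cnt : ∀ pr ∈ F, ∀ p p', procOf w pr.1 = some p → procOf w' pr.2 = some p' →
            ∀ a < n, ccnt k w a p = ccnt k w' a p'
  inj : ∀ pr ∈ F, ∀ qr ∈ F, (pr.1 = qr.1 ↔ pr.2 = qr.2)
  sim : ∀ pr ∈ F, ∀ qr ∈ F,
            (procOf w pr.1 = procOf w qr.1 ↔ procOf w' pr.2 = procOf w' qr.2)

lemma PIso.swap {n k P w P' w' F} (h : PIso n k P w P' w' F) :
    PIso n k P' w' P w (F.map Prod.swap) := by
  have hmem : ∀ pr ∈ F.map Prod.swap, Prod.swap pr ∈ F := by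
    intro pr hpr
    rw [List.mem_map] at hpr
    obtain ⟨qr, hqr, rfl⟩ := hpr
    simpa using hqr
  refine ⟨?_, ?_, ?_, ?_, ?_, ?_, ?_, ?_⟩
  · exact fun pr hpr => h.dom2 _ (hmem pr hpr)
  · exact fun pr hpr => h.dom1 _ (hmem pr hpr)
  · exact fun pr hpr => (h.kind _ (hmem pr hpr)).symm
  · exact fun pr hpr => (h.lett _ (hmem pr hpr)).symm
  · exact fun pr hpr => (h.ptyp _ (hmem pr hpr)).symm
  · exact fun pr hpr p p' h1 h2 a ha => (h.cnt _ (hmem pr hpr) p' p h2 h1 a ha).symm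
  · exact fun pr hpr qr hqr => (h.inj _ (hmem pr hpr) _ (hmem qr hqr)).symm
  · exact fun pr hpr qr hqr => (h.sim _ (hmem pr hpr) _ (hmem qr hqr)).symm

lemma PIso.cons_mem {n k P w P' w' F} {pr : Elem × Elem}
    (hpr : pr ∈ F) (h : PIso n k P w P' w' F) : PIso n k P w P' w' (pr :: F) := by
  have hmem : ∀ qr ∈ pr :: F, qr ∈ F := by
    intro qr hqr
    rcases List.mem_cons.1 hqr with rfl | hq
    exacts [hpr, hq]
  exact ⟨fun qr hq => h.dom1 _ (hmem qr hq), fun qr hq => h.dom2 _ (hmem qr hq),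
    fun qr hq => h.kind _ (hmem qr hq), fun qr hq => h.lett _ (hmem qr hq),
    fun qr hq => h.ptyp _ (hmem qr hq), fun qr hq => h.cnt _ (hmem qr hq),
    fun qr hq rr hr => h.inj _ (hmem qr hq) _ (hmem rr hr),
    fun qr hq rr hr => h.sim _ (hmem qr hq) _ (hmem rr hr)⟩

lemma PIso.cons {n k P w P' w' F} {u u' : Elem}
    (hF : PIso n k P w P' w' F)
    (hud : elemDom P w u) (hu'd : elemDom P' w' u')
    (hkind : u.isLeft = u'.isLeft)
    (hlet : letterOf w u = letterOf w' u')
    (htyp : (procOf w u).bind (fun p => typeOfProc P p)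
       = (procOf w' u').bind (fun p => typeOfProc P' p))
    (hcnt : ∀ p p', procOf w u = some p → procOf w' u' = some p' →
       ∀ a < n, ccnt k w a p = ccnt k w' a p')
    (hfreshL : ∀ pr ∈ F, pr.1 ≠ u) (hfreshR : ∀ pr ∈ F, pr.2 ≠ u')
    (hpat : ∀ pr ∈ F, (procOf w pr.1 = procOf w u ↔ procOf w' pr.2 = procOf w' u')) :
    PIso n k P w P' w' ((u, u') :: F) := by
  refine ⟨?_, ?_, ?_, ?_, ?_, ?_, ?_, ?_⟩
  · intro pr hpr
    rcases List.mem_cons.1 hpr with rfl | hpr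
    exacts [hud, hF.dom1 _ hpr]
  · intro pr hpr
    rcases List.mem_cons.1 hpr with rfl | hpr
    exacts [hu'd, hF.dom2 _ hpr]
  · intro pr hpr
    rcases List.mem_cons.1 hpr with rfl | hpr
    exacts [hkind, hF.kind _ hpr]
  · intro pr hpr
    rcases List.mem_cons.1 hpr with rfl | hpr
    exacts [hlet, hF.lett _ hpr]
  · intro pr hpr
    rcases List.mem_cons.1 hpr with rfl | hpr
    exacts [htyp, hF.ptyp _ hpr]
  · intro pr hpr
    rcases List.mem_cons.1 hpr with rfl | hpr
    exacts [hcnt, hF.cnt _ hpr]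
  · intro pr hpr qr hqr
    rcases List.mem_cons.1 hpr with rfl | hpr <;> rcases List.mem_cons.1 hqr with rfl | hqr
    · simp
    · constructor
      · intro h; exact absurd h.symm (hfreshL _ hqr)
      · intro h; exact absurd h.symm (hfreshR _ hqr)
    · constructor
      · intro h; exact absurd h (hfreshL _ hpr)
      · intro h; exact absurd h (hfreshR _ hpr)
    · exact hF.inj _ hpr _ hqr
  · intro pr hpr qr hqr
    rcases List.mem_cons.1 hpr with rfl | hpr <;> rcases List.mem_cons.1 hqr with rfl | hqr
    · simp
    · rw [show (procOf w (u,u').1 = procOf w qr.1) ↔ (procOf w qr.1 = procOf w u) from eq_comm,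
        show (procOf w' (u,u').2 = procOf w' qr.2) ↔ (procOf w' qr.2 = procOf w' u') from eq_comm]
      exact hpat _ hqr
    · exact hpat _ hpr
    · exact hF.sim _ hpr _ hqr

lemma procOf_inl (w : Exec) (p : ℕ) : procOf w (Sum.inl p) = some p := rfl

lemma mem_filterMap_toFinset {α β : Type} [DecidableEq β] {l : List α} {f : α → Option β}
    {b : β} : b ∈ (l.filterMap f).toFinset ↔ ∃ x ∈ l, f x = some b := by
  rw [List.mem_toFinset, List.mem_filterMap]

lemma exists_inr_of_isLeft_false {e : Elem} (h : e.isLeft = false) :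
    ∃ j, e = Sum.inr j := by
  cases e with
  | inl p => simp at h
  | inr j => exact ⟨j, rfl⟩

lemma forth {Alph : Alphabet} {k : ℕ} {P : ProcTriple} {w : Exec}
    {P' : ProcTriple} {w' : Exec}
    (hv : w.valid Alph P) (hv' : w'.valid Alph P')
    (hprof : profEq Alph.n k P w P' w')
    {F : List (Elem × Elem)} (hF : PIso Alph.n k P w P' w' F)
    (hlen : F.length < k) {u : Elem} (hu : elemDom P w u) :
    ∃ u', elemDom P' w' u' ∧ PIso Alph.n k P w P' w' ((u, u') :: F) := by
  classical
  by_cases hA : ∃ pr ∈ F, pr.1 = u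
  · obtain ⟨pr, hprF, hpr1⟩ := hA
    refine ⟨pr.2, hF.dom2 _ hprF, ?_⟩
    have heq : (u, pr.2) = pr := Prod.ext hpr1.symm rfl
    rw [heq]
    exact PIso.cons_mem hprF hF
  push_neg at hA
  obtain ⟨q, hq⟩ := Option.isSome_iff_exists.1 (procOf_isSome_of_dom hu)
  have hqall : q ∈ P.all := procOf_mem_all hv hu hq
  by_cases hB : ∃ pr ∈ F, procOf w pr.1 = some q
  · -- the class of `u` is already linked
    obtain ⟨pr₀, h0F, h01⟩ := hB
    obtain ⟨q', hq'⟩ :=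
      Option.isSome_iff_exists.1 (procOf_isSome_of_dom (hF.dom2 _ h0F))
    have hq'all : q' ∈ P'.all := procOf_mem_all hv' (hF.dom2 _ h0F) hq'
    have hty : typeOfProc P q = typeOfProc P' q' := by
      have h2 := hF.ptyp _ h0F
      rw [h01, hq'] at h2
      simpa using h2
    have hcnt0 : ∀ a < Alph.n, ccnt k w a q = ccnt k w' a q' :=
      fun a ha => hF.cnt _ h0F q q' h01 hq' a ha
    have hPat : ∀ pr ∈ F, (procOf w pr.1 = some q ↔ procOf w' pr.2 = some q') := by
      intro pr hpr
      have h2 := hF.sim _ hpr _ h0F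
      rw [h01, hq'] at h2
      exact h2
    cases u with
    | inl p =>
        have hpq : p = q := by
          have : (some p : Option ℕ) = some q := hq
          exact Option.some_inj.1 this
        subst hpq
        have hfreshR : ∀ pr ∈ F, pr.2 ≠ Sum.inl q' := by
          intro pr hpr hc
          have h2 : procOf w' pr.2 = some q' := by rw [hc]; rfl
          have h3 : procOf w pr.1 = some p := (hPat pr hpr).2 h2
          have h4 : pr.1.isLeft = true := by rw [hF.kind _ hpr, hc]; rfl
          obtain ⟨p₁, hp₁⟩ := Sum.isLeft_iff.1 h4
          rw [hp₁] at h3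
          have : p₁ = p := Option.some_inj.1 h3
          exact hA pr hpr (by rw [hp₁, this])
        refine ⟨Sum.inl q', hq'all, ?_⟩
        refine PIso.cons hF hu hq'all rfl rfl ?_ ?_ hA hfreshR ?_
        · rw [hq, show procOf w' (Sum.inl q') = some q' from rfl]
          simpa using hty
        · intro p₁ p₁' hp₁ hp₁' a ha
          have h1 : p₁ = p := (Option.some_inj.1 (hq.symm.trans hp₁)).symm
          have h2' : (some q' : Option ℕ) = some p₁' := hp₁'
          have h2 : p₁' = q' := (Option.some_inj.1 h2').symm
          rw [h1, h2]
          exact hcnt0 a ha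
        · intro pr hpr
          rw [show procOf w (Sum.inl p) = some p from hq,
            show procOf w' (Sum.inl q') = some q' from rfl]
          exact hPat pr hpr
    | inr i =>
        obtain ⟨σ, hσ, hσ2⟩ := Option.map_eq_some_iff.1 hq
        set a := σ.1 with ha
        have hat : w.at? i = some (a, q) := by
          rw [hσ]; congr 1; exact Prod.ext rfl hσ2
        have haN : a < Alph.n := by
          rcases at?_isEvent hv hσ with ⟨h1, -, -⟩ | ⟨h1, -, -⟩ <;> exact h1
        set usedL : Finset ℕ :=
          (((F.map Prod.fst).filterMap Sum.getRight?).toFinset).filter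
            (fun j => w.at? j = some (a, q)) with husedL
        set usedR : Finset ℕ :=
          (((F.map Prod.snd).filterMap Sum.getRight?).toFinset).filter
            (fun j => w'.at? j = some (a, q')) with husedR
        have husedLmem : ∀ j, j ∈ usedL ↔
            ((∃ pr ∈ F, pr.1 = Sum.inr j) ∧ w.at? j = some (a, q)) := by
          intro j
          rw [husedL, Finset.mem_filter, mem_filterMap_toFinset]
          constructor
          · rintro ⟨⟨e, he, hge⟩, h2⟩
            obtain ⟨pr, hpr, rfl⟩ := List.mem_map.1 he
            exact ⟨⟨pr, hpr, Sum.getRight?_eq_some_iff.1 hge⟩, h2⟩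
          · rintro ⟨⟨pr, hpr, h1⟩, h2⟩
            exact ⟨⟨pr.1, List.mem_map.2 ⟨pr, hpr, rfl⟩,
              Sum.getRight?_eq_some_iff.2 h1⟩, h2⟩
        have husedRmem : ∀ j, j ∈ usedR ↔
            ((∃ pr ∈ F, pr.2 = Sum.inr j) ∧ w'.at? j = some (a, q')) := by
          intro j
          rw [husedR, Finset.mem_filter, mem_filterMap_toFinset]
          constructor
          · rintro ⟨⟨e, he, hge⟩, h2⟩
            obtain ⟨pr, hpr, rfl⟩ := List.mem_map.1 he
            exact ⟨⟨pr, hpr, Sum.getRight?_eq_some_iff.1 hge⟩, h2⟩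
          · rintro ⟨⟨pr, hpr, h1⟩, h2⟩
            exact ⟨⟨pr.2, List.mem_map.2 ⟨pr, hpr, rfl⟩,
              Sum.getRight?_eq_some_iff.2 h1⟩, h2⟩
        have husedLcard : usedL.card ≤ F.length := by
          calc usedL.card ≤ ((F.map Prod.fst).filterMap Sum.getRight?).toFinset.card :=
                Finset.card_filter_le _ _
            _ ≤ ((F.map Prod.fst).filterMap Sum.getRight?).length :=
                List.toFinset_card_le _
            _ ≤ (F.map Prod.fst).length := List.length_filterMap_le _ _
            _ = F.length := List.length_map _
        have hinotused : i ∉ usedL := by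
          intro hc
          obtain ⟨⟨pr, hpr, h1⟩, -⟩ := (husedLmem i).1 hc
          exact hA pr hpr h1
        have hccntq : usedL.card + 1 ≤ ccnt k w a q := by
          refine le_ccnt_of_hasGe ⟨insert i usedL, ?_, ?_⟩ (by omega)
          · rw [Finset.card_insert_of_notMem hinotused]
          · intro j hj
            rcases Finset.mem_insert.1 hj with rfl | hj
            · exact hat
            · exact ((husedLmem j).1 hj).2
        set f : ℕ → ℕ := fun j =>
          if h : ∃ pr, pr ∈ F ∧ pr.2 = Sum.inr j then
            ((Classical.choose h).1.getRight?).getD 0 else 0 with hf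
        have hkey : ∀ j ∈ usedR, ∃ j₁, f j = j₁ ∧ j₁ ∈ usedL ∧
            ∀ (h : ∃ pr, pr ∈ F ∧ pr.2 = Sum.inr j), (Classical.choose h).1 = Sum.inr j₁ := by
          intro j hj
          obtain ⟨⟨pr', hpr'F, hpr'2⟩, hat'⟩ := (husedRmem j).1 hj
          have h : ∃ pr, pr ∈ F ∧ pr.2 = Sum.inr j := ⟨pr', hpr'F, hpr'2⟩
          obtain ⟨hprF, hpr2⟩ := Classical.choose_spec h
          have hproc2 : procOf w' (Classical.choose h).2 = some q' := by
            rw [hpr2]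
            show (w'.at? j).map Prod.snd = some q'
            rw [hat']; rfl
          have hproc1 : procOf w (Classical.choose h).1 = some q :=
            (hPat _ hprF).2 hproc2
          have hkd : (Classical.choose h).1.isLeft = false := by
            rw [hF.kind _ hprF, hpr2]; rfl
          obtain ⟨j₁, hj₁⟩ := exists_inr_of_isLeft_false hkd
          have hlett : letterOf w (Classical.choose h).1 = some a := by
            rw [hF.lett _ hprF, hpr2]
            show (w'.at? j).map Prod.fst = some a
            rw [hat']; rfl
          rw [hj₁] at hproc1 hlett
          obtain ⟨σ₁, hσ₁, hσ₁2⟩ := Option.map_eq_some_iff.1 hproc1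
          obtain ⟨σ₂, hσ₂, hσ₂1⟩ := Option.map_eq_some_iff.1 hlett
          rw [hσ₁] at hσ₂
          obtain rfl := Option.some_inj.1 hσ₂
          have hatj₁ : w.at? j₁ = some (a, q) := by
            rw [hσ₁]; congr 1; exact Prod.ext hσ₂1 hσ₁2
          refine ⟨j₁, ?_, (husedLmem j₁).2 ⟨⟨_, hprF, hj₁⟩, hatj₁⟩, fun h' => hj₁⟩
          show (if h2 : ∃ pr, pr ∈ F ∧ pr.2 = Sum.inr j then
            ((Classical.choose h2).1.getRight?).getD 0 else 0) = j₁
          rw [dif_pos h]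
          rw [show (Classical.choose h).1 = Sum.inr j₁ from hj₁]
          rfl
        have husedRcard : usedR.card ≤ usedL.card := by
          refine Finset.card_le_card_of_injOn f (fun j hj => ?_) ?_
          · obtain ⟨j₁, he, hm, -⟩ := hkey j hj
            rwa [he]
          · intro j₁ hj₁ j₂ hj₂ hfe
            obtain ⟨m₁, he₁, -, hc₁⟩ := hkey j₁ hj₁
            obtain ⟨m₂, he₂, -, hc₂⟩ := hkey j₂ hj₂
            obtain ⟨⟨pr₁, hpr₁F, hpr₁2⟩, -⟩ := (husedRmem j₁).1 hj₁
            obtain ⟨⟨pr₂, hpr₂F, hpr₂2⟩, -⟩ := (husedRmem j₂).1 hj₂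
            have h₁ : ∃ pr, pr ∈ F ∧ pr.2 = Sum.inr j₁ := ⟨pr₁, hpr₁F, hpr₁2⟩
            have h₂ : ∃ pr, pr ∈ F ∧ pr.2 = Sum.inr j₂ := ⟨pr₂, hpr₂F, hpr₂2⟩
            have hcc₁ := Classical.choose_spec h₁
            have hcc₂ := Classical.choose_spec h₂
            have heq1 : (Classical.choose h₁).1 = (Classical.choose h₂).1 := by
              rw [hc₁ h₁, hc₂ h₂]
              rw [he₁, he₂] at hfe
              rw [hfe]
            have := (hF.inj _ hcc₁.1 _ hcc₂.1).1 heq1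
            rw [hcc₁.2, hcc₂.2] at this
            exact Sum.inr_injective this
        have hlt : usedR.card < ccnt k w' a q' := by
          rw [← hcnt0 a haN]
          omega
        obtain ⟨i', hi'pos, hi'new⟩ := exists_fresh_pos usedR hlt
        have hat' : w'.at? i' = some (a, q') := hi'pos
        have hdom' : elemDom P' w' (Sum.inr i') := posDom_of_at? hat'
        refine ⟨Sum.inr i', hdom', ?_⟩
        have hprocu : procOf w (Sum.inr i) = some q := hq
        have hprocu' : procOf w' (Sum.inr i') = some q' := by
          show (w'.at? i').map Prod.snd = some q'
          rw [hat']; rfl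
        refine PIso.cons hF hu hdom' rfl ?_ ?_ ?_ hA ?_ ?_
        · show (w.at? i).map Prod.fst = (w'.at? i').map Prod.fst
          rw [hat, hat']
          rfl
        · rw [hprocu, hprocu']
          simpa using hty
        · intro p₁ p₁' hp₁ hp₁' a' ha'
          rw [hprocu] at hp₁
          rw [hprocu'] at hp₁'
          obtain rfl := Option.some_inj.1 hp₁
          obtain rfl := Option.some_inj.1 hp₁'
          exact hcnt0 a' ha'
        · intro pr hpr hc
          refine hi'new ((husedRmem i').2 ⟨⟨pr, hpr, hc⟩, hat'⟩)
        · intro pr hpr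
          rw [hprocu, hprocu']
          exact hPat pr hpr
  · -- the class of `u` is fresh
    obtain ⟨θq, hθq⟩ := Option.isSome_iff_exists.1 (typeOfProc_isSome_of_mem_all hqall)
    set sig : ℕ → ℕ := fun a => ccnt k w a q with hsig
    set linkedL : Finset ℕ := (F.filterMap (fun pr => procOf w pr.1)).toFinset with hlL
    set linkedR : Finset ℕ := (F.filterMap (fun pr => procOf w' pr.2)).toFinset with hlR
    have hlLmem : ∀ p, p ∈ linkedL ↔ ∃ pr ∈ F, procOf w pr.1 = some p :=
      fun p => mem_filterMap_toFinset
    have hlRmem : ∀ p, p ∈ linkedR ↔ ∃ pr ∈ F, procOf w' pr.2 = some p :=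
      fun p => mem_filterMap_toFinset
    set RL := (clsSet Alph.n k P w θq sig) ∩ linkedL with hRL
    set RR := (clsSet Alph.n k P' w' θq sig) ∩ linkedR with hRR
    have hqcls : q ∈ clsSet Alph.n k P w θq sig := by
      rw [clsSet, Finset.mem_filter]
      exact ⟨hqall, hθq, fun a ha => rfl⟩
    have hqlinked : q ∉ linkedL := fun hc => hB ((hlLmem q).1 hc)
    have hRLcard : RL.card + 1 ≤ (clsSet Alph.n k P w θq sig).card := by
      have hsub : insert q RL ⊆ clsSet Alph.n k P w θq sig :=
        Finset.insert_subset hqcls Finset.inter_subset_left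
      have hc := Finset.card_le_card hsub
      rwa [Finset.card_insert_of_notMem
        (fun hc' => hqlinked (Finset.mem_inter.1 hc').2)] at hc
    have hRLk : RL.card + 1 ≤ k := by
      have h1 : RL.card ≤ linkedL.card := Finset.card_le_card Finset.inter_subset_right
      have h2 : linkedL.card ≤ F.length :=
        le_trans (List.toFinset_card_le _) (List.length_filterMap_le _ _)
      omega
    have hclsR : RL.card + 1 ≤ (clsSet Alph.n k P' w' θq sig).card := by
      have hpe := hprof θq sig
      omega
    have hkey : ∀ p'' ∈ RR, ∀ (h : ∃ pr, pr ∈ F ∧ procOf w' pr.2 = some p''),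
        ∃ pL, procOf w (Classical.choose h).1 = some pL ∧ pL ∈ RL := by
      intro p'' hp'' h
      obtain ⟨hprF, hpr2⟩ := Classical.choose_spec h
      set pr := Classical.choose h
      obtain ⟨pL, hpL⟩ := Option.isSome_iff_exists.1 (procOf_isSome_of_dom (hF.dom1 _ hprF))
      obtain ⟨hp''cls, hp''link⟩ := Finset.mem_inter.1 hp''
      rw [clsSet, Finset.mem_filter] at hp''cls
      obtain ⟨hp''all, hp''ty, hp''cnt⟩ := hp''cls
      have htyL : typeOfProc P pL = some θq := by
        have h2 := hF.ptyp _ hprF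
        rw [hpL, hpr2] at h2
        simpa [hp''ty] using h2
      have hcntL : ∀ a < Alph.n, ccnt k w a pL = sig a := by
        intro a ha
        rw [hF.cnt _ hprF pL p'' hpL hpr2 a ha]
        exact hp''cnt a ha
      refine ⟨pL, hpL, Finset.mem_inter.2 ⟨?_, (hlLmem pL).2 ⟨pr, hprF, hpL⟩⟩⟩
      rw [clsSet, Finset.mem_filter]
      exact ⟨mem_all_of_typeOfProc htyL, htyL, hcntL⟩
    set f : ℕ → ℕ := fun p'' =>
      if h : ∃ pr, pr ∈ F ∧ procOf w' pr.2 = some p'' then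
        (procOf w (Classical.choose h).1).getD 0 else 0 with hf
    have hRRle : RR.card ≤ RL.card := by
      refine Finset.card_le_card_of_injOn f (fun p'' hp'' => ?_) ?_
      · have h : ∃ pr, pr ∈ F ∧ procOf w' pr.2 = some p'' :=
          (hlRmem p'').1 (Finset.mem_inter.1 hp'').2
        obtain ⟨pL, hpL, hmem⟩ := hkey p'' hp'' h
        rw [hf]
        simp only [dif_pos h]
        rw [hpL]
        exact hmem
      · intro p₁ hp₁ p₂ hp₂ hfe
        have h₁ : ∃ pr, pr ∈ F ∧ procOf w' pr.2 = some p₁ :=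
          (hlRmem p₁).1 (Finset.mem_inter.1 hp₁).2
        have h₂ : ∃ pr, pr ∈ F ∧ procOf w' pr.2 = some p₂ :=
          (hlRmem p₂).1 (Finset.mem_inter.1 hp₂).2
        obtain ⟨pL₁, hpL₁, -⟩ := hkey p₁ hp₁ h₁
        obtain ⟨pL₂, hpL₂, -⟩ := hkey p₂ hp₂ h₂
        have hcc₁ := Classical.choose_spec h₁
        have hcc₂ := Classical.choose_spec h₂
        rw [hf] at hfe
        simp only [dif_pos h₁, dif_pos h₂] at hfe
        rw [hpL₁, hpL₂] at hfe
        simp only [Option.getD_some] at hfe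
        have hpp : procOf w (Classical.choose h₁).1 = procOf w (Classical.choose h₂).1 := by
          rw [hpL₁, hpL₂, hfe]
        have := (hF.sim _ hcc₁.1 _ hcc₂.1).1 hpp
        rw [hcc₁.2, hcc₂.2] at this
        exact Option.some_inj.1 this
    have hfresh : ∃ p', p' ∈ clsSet Alph.n k P' w' θq sig ∧ p' ∉ linkedR := by
      by_contra hc
      push_neg at hc
      have hsub : clsSet Alph.n k P' w' θq sig ⊆ RR :=
        fun p hp => Finset.mem_inter.2 ⟨hp, hc p hp⟩
      have := Finset.card_le_card hsub
      omega
    obtain ⟨p', hp'cls, hp'link⟩ := hfresh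
    have hp'cls' := hp'cls
    rw [clsSet, Finset.mem_filter] at hp'cls'
    obtain ⟨hp'all, hp'ty, hp'cnt⟩ := hp'cls'
    have hPat : ∀ pr ∈ F,
        (procOf w pr.1 = some q ↔ procOf w' pr.2 = some p') := by
      intro pr hpr
      constructor
      · intro hc; exact absurd ⟨pr, hpr, hc⟩ hB
      · intro hc; exact absurd ((hlRmem p').2 ⟨pr, hpr, hc⟩) hp'link
    have hcnt0 : ∀ a < Alph.n, ccnt k w a q = ccnt k w' a p' :=
      fun a ha => (hp'cnt a ha).symm
    cases u with
    | inl p =>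
        have hpq : p = q := Option.some_inj.1 (hq : (some p : Option ℕ) = some q)
        rw [hpq] at hu hA ⊢
        have hq2 : procOf w (Sum.inl q) = some q := rfl
        have hfreshR : ∀ pr ∈ F, pr.2 ≠ Sum.inl p' := by
          intro pr hpr hc
          have h2 : procOf w' pr.2 = some p' := by rw [hc]; rfl
          exact absurd ((hlRmem p').2 ⟨pr, hpr, h2⟩) hp'link
        refine ⟨Sum.inl p', mem_all_of_typeOfProc hp'ty, ?_⟩
        refine PIso.cons hF hu (mem_all_of_typeOfProc hp'ty) rfl rfl ?_ ?_ hA hfreshR ?_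
        · rw [hq2, show procOf w' (Sum.inl p') = some p' from rfl]
          simp [hθq, hp'ty]
        · intro p₁ p₁' hp₁ hp₁' a ha
          have h1 : p₁ = q := (Option.some_inj.1 (hq2.symm.trans hp₁)).symm
          have h2' : (some p' : Option ℕ) = some p₁' := hp₁'
          have h2 : p₁' = p' := (Option.some_inj.1 h2').symm
          rw [h1, h2]
          exact hcnt0 a ha
        · intro pr hpr
          rw [hq2, show procOf w' (Sum.inl p') = some p' from rfl]
          exact hPat pr hpr
    | inr i =>
        obtain ⟨σ, hσ, hσ2⟩ := Option.map_eq_some_iff.1 hq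
        set a := σ.1 with ha
        have hat : w.at? i = some (a, q) := by
          rw [hσ]; congr 1; exact Prod.ext rfl hσ2
        have haN : a < Alph.n := by
          rcases at?_isEvent hv hσ with ⟨h1, -, -⟩ | ⟨h1, -, -⟩ <;> exact h1
        have hge1 : 1 ≤ ccnt k w a q := by
          refine le_ccnt_of_hasGe ⟨{i}, rfl, ?_⟩ (by omega)
          intro j hj
          rw [Finset.mem_coe, Finset.mem_singleton] at hj
          rw [hj]
          exact hat
        have hlt : (∅ : Finset ℕ).card < ccnt k w' a p' := by
          rw [← hcnt0 a haN]
          simpa using (show 0 < ccnt k w a q from hge1)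
        obtain ⟨i', hi'pos, -⟩ := exists_fresh_pos ∅ hlt
        have hat' : w'.at? i' = some (a, p') := hi'pos
        have hdom' : elemDom P' w' (Sum.inr i') := posDom_of_at? hat'
        have hprocu : procOf w (Sum.inr i) = some q := hq
        have hprocu' : procOf w' (Sum.inr i') = some p' := by
          show (w'.at? i').map Prod.snd = some p'
          rw [hat']; rfl
        refine ⟨Sum.inr i', hdom', ?_⟩
        refine PIso.cons hF hu hdom' rfl ?_ ?_ ?_ hA ?_ ?_
        · show (w.at? i).map Prod.fst = (w'.at? i').map Prod.fst
          rw [hat, hat']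
          rfl
        · rw [hprocu, hprocu']
          simp [hθq, hp'ty]
        · intro p₁ p₁' hp₁ hp₁' a' ha'
          rw [hprocu] at hp₁
          rw [hprocu'] at hp₁'
          obtain rfl := Option.some_inj.1 hp₁
          obtain rfl := Option.some_inj.1 hp₁'
          exact hcnt0 a' ha'
        · intro pr hpr hc
          have h2 : procOf w' pr.2 = some p' := by rw [hc]; exact hprocu'
          exact absurd ((hlRmem p').2 ⟨pr, hpr, h2⟩) hp'link
        · intro pr hpr
          rw [hprocu, hprocu']
          exact hPat pr hpr

lemma ptype_dir {n k : ℕ} {P : ProcTriple} {w : Exec} {P' : ProcTriple} {w' : Exec}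
    {F : List (Elem × Elem)} (hF : PIso n k P w P' w' F) {e e' : Elem}
    (hm : (e, e') ∈ F) {θ : PType} (h : ∃ p, e = Sum.inl p ∧ p ∈ P.ofType θ) :
    ∃ p', e' = Sum.inl p' ∧ p' ∈ P'.ofType θ := by
  obtain ⟨p, rfl, hθ⟩ := h
  have hkd : e'.isLeft = true := by
    rw [← hF.kind _ hm]; rfl
  obtain ⟨p', hp'⟩ := Sum.isLeft_iff.1 hkd
  have h2 := hF.ptyp _ hm
  rw [show procOf w (Sum.inl p, e').1 = some p from rfl,
    show (Sum.inl p, e').2 = e' from rfl, hp',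
    show procOf w' (Sum.inl p') = some p' from rfl] at h2
  simp only [Option.bind_some] at h2
  exact ⟨p', hp', mem_ofType_iff.2 (h2 ▸ mem_ofType_iff.1 hθ)⟩

lemma sat_iff_of_piso {Alph : Alphabet} {k : ℕ} {P : ProcTriple} {w : Exec}
    {P' : ProcTriple} {w' : Exec}
    (hv : w.valid Alph P) (hv' : w'.valid Alph P')
    (hprof : profEq Alph.n k P w P' w') :
    ∀ (φ : FO), φ.onlySim → ∀ (j : ℕ) (F : List (Elem × Elem)) (v v' : ℕ → Elem),
      rank φ ≤ j → PIso Alph.n k P w P' w' F → F.length + j ≤ k →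
      (∀ x ∈ φ.free, (v x, v' x) ∈ F) →
      (Sat P w v φ ↔ Sat P' w' v' φ) := by
  have hprof' : profEq Alph.n k P' w' P w := fun θ ℓ => (hprof θ ℓ).symm
  intro φ
  induction φ with
  | ptype θ x =>
      intro _ j F v v' _ hF _ hfree
      have hm : (v x, v' x) ∈ F := hfree x (by simp [FO.free])
      constructor
      · exact fun h => ptype_dir hF hm h
      · intro h
        have hm' : (v' x, v x) ∈ F.map Prod.swap :=
          List.mem_map.2 ⟨(v x, v' x), hm, rfl⟩
        exact ptype_dir hF.swap hm' h
  | letter a x =>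
      intro _ j F v v' _ hF _ hfree
      have hm : (v x, v' x) ∈ F := hfree x (by simp [FO.free])
      have := hF.lett _ hm
      simp only [Sat]
      rw [show letterOf w (v x, v' x).1 = letterOf w (v x) from rfl,
        show letterOf w' (v x, v' x).2 = letterOf w' (v' x) from rfl] at this
      rw [this]
  | eq x y =>
      intro _ j F v v' _ hF _ hfree
      have hmx : (v x, v' x) ∈ F := hfree x (by simp [FO.free])
      have hmy : (v y, v' y) ∈ F := hfree y (by simp [FO.free])
      exact hF.inj _ hmx _ hmy
  | sim x y =>
      intro _ j F v v' _ hF _ hfree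
      have hmx : (v x, v' x) ∈ F := hfree x (by simp [FO.free])
      have hmy : (v y, v' y) ∈ F := hfree y (by simp [FO.free])
      have hs := hF.sim _ hmx _ hmy
      simp only [Sat]
      constructor
      · rintro ⟨h1, h2⟩
        exact ⟨procOf_isSome_of_dom (hF.dom2 _ hmx), hs.1 h2⟩
      · rintro ⟨h1, h2⟩
        exact ⟨procOf_isSome_of_dom (hF.dom1 _ hmx), hs.2 h2⟩
  | lt x y => intro hsim; exact hsim.elim
  | succ x y => intro hsim; exact hsim.elim
  | not φ ih =>
      intro hsim j F v v' hrank hF hk hfree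
      simp only [Sat]
      rw [ih hsim j F v v' hrank hF hk hfree]
  | or φ ψ ih1 ih2 =>
      intro hsim j F v v' hrank hF hk hfree
      simp only [Sat]
      rw [ih1 hsim.1 j F v v' (le_trans (le_max_left _ _) hrank) hF hk
          (fun x hx => hfree x (by simp [FO.free, hx])),
        ih2 hsim.2 j F v v' (le_trans (le_max_right _ _) hrank) hF hk
          (fun x hx => hfree x (by simp [FO.free, hx]))]
  | ex x ψ ih =>
      intro hsim j F v v' hrank hF hk hfree
      have hrank' : rank ψ + 1 ≤ j := hrank
      simp only [Sat]
      constructor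
      · rintro ⟨u, hu, hsat⟩
        obtain ⟨u', hu'd, hF'⟩ := forth hv hv' hprof hF (by omega) hu
        refine ⟨u', hu'd, ?_⟩
        rw [← ih hsim (j - 1) ((u, u') :: F) (Function.update v x u)
          (Function.update v' x u') (by omega) hF' (by simp; omega) ?_]
        · exact hsat
        · intro y hy
          by_cases hxy : y = x
          · subst hxy; simp
          · rw [Function.update_of_ne hxy, Function.update_of_ne hxy]
            exact List.mem_cons.2 (Or.inr (hfree y (by simp [FO.free, hy, hxy])))
      · rintro ⟨u', hu'd, hsat⟩
        obtain ⟨u, hud, hF'⟩ := forth hv' hv hprof' hF.swap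
          (by simpa using (by omega : F.length < k)) hu'd
        have hF'' : PIso Alph.n k P w P' w' ((u, u') :: F) := by
          have := hF'.swap
          rw [show ((u', u) :: F.map Prod.swap).map Prod.swap = (u, u') :: F by
            simp [List.map_map, Function.comp]] at this
          exact this
        refine ⟨u, hud, ?_⟩
        rw [ih hsim (j - 1) ((u, u') :: F) (Function.update v x u)
          (Function.update v' x u') (by omega) hF'' (by simp; omega) ?_]
        · exact hsat
        · intro y hy
          by_cases hxy : y = x
          · subst hxy; simp
          · rw [Function.update_of_ne hxy, Function.update_of_ne hxy]
            exact List.mem_cons.2 (Or.inr (hfree y (by simp [FO.free, hy, hxy])))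

lemma satS_iff_of_profEq {Alph : Alphabet} {k : ℕ} {P : ProcTriple} {w : Exec}
    {P' : ProcTriple} {w' : Exec}
    (hv : w.valid Alph P) (hv' : w'.valid Alph P')
    (hprof : profEq Alph.n k P w P' w')
    {φ : FO} (hsim : φ.onlySim) (hsen : φ.free = ∅) (hrank : rank φ ≤ k) :
    (SatS P w φ ↔ SatS P' w' φ) := by
  have hempty : PIso Alph.n k P w P' w' [] :=
    ⟨by simp, by simp, by simp, by simp, by simp, by simp, by simp, by simp⟩
  exact sat_iff_of_piso hv hv' hprof φ hsim k [] _ _ hrank hempty (by simp)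
    (by simp [hsen])

lemma clsSet_empty_of_gt {n k : ℕ} {P : ProcTriple} {w : Exec} {θ : PType}
    {ℓ : ℕ → ℕ} {a : ℕ} (ha : a < n) (hka : k < ℓ a) :
    clsSet n k P w θ ℓ = ∅ := by
  classical
  refine Finset.eq_empty_of_forall_notMem ?_
  intro p hp
  rw [clsSet, Finset.mem_filter] at hp
  obtain ⟨-, -, hcnt⟩ := hp
  have h1 := hcnt a ha
  have h2 := ccnt_le k w a p
  omega

/-- Normal form for FO[∼]: every sentence `φ ∈ FO_A[∼]` is, for some
threshold `B`, equivalent (over all pairs `(P, w)` of a process triple and a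
`P`-execution) to a disjunction of conjunctions of formulas of the form
`∃^{⋈m} y. (θ(y) ∧ ψ_{B,ℓ}(y))` with `⋈ ∈ {≥, =}`, `m ∈ ℕ`, `θ ∈ T`, and
`ℓ ∈ {0,…,B}^A`.  The disjunction of conjunctions is given by a list of lists of
atoms `(isEq, m, θ, ℓ)`. -/
theorem normal_form_FOsim (Alph : Alphabet) (φ : FO)
    (hsen : φ.isSentence) (hsim : φ.onlySim) :
    ∃ (B : ℕ) (dnf : List (List (Bool × ℕ × PType × (ℕ → ℕ)))),
      (∀ conj ∈ dnf, ∀ atom ∈ conj, ∀ a : ℕ, atom.2.2.2 a ≤ B) ∧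
      ∀ (P : ProcTriple) (w : Exec), w.valid Alph P →
        (SatS P w φ ↔
          SatS P w (bigOr (dnf.map fun conj =>
            bigAnd (conj.map fun atom =>
              nfAtom Alph.n B atom.1 atom.2.1 atom.2.2.1 atom.2.2.2)))) := by
  classical
  rw [FO.isSentence] at hsen
  set n := Alph.n with hn
  set k := rank φ + 1 with hk
  set exd : (Fin n → Fin (k + 1)) → (ℕ → ℕ) :=
    fun ℓv a => if h : a < n then (ℓv ⟨a, h⟩ : ℕ) else 0 with hexd
  set profOf : ProcTriple → Exec → ((PType × (Fin n → Fin (k + 1))) → Fin (k + 1)) :=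
    fun P w tp => ⟨min k ((clsSet n k P w tp.1 (exd tp.2)).card), by omega⟩ with hprofOf
  set Good : Finset ((PType × (Fin n → Fin (k + 1))) → Fin (k + 1)) :=
    Finset.univ.filter (fun π => ∃ P₁ w₁, w₁.valid Alph P₁ ∧ SatS P₁ w₁ φ ∧
      profOf P₁ w₁ = π) with hGood
  have hBk : ∀ (ℓv : Fin n → Fin (k + 1)), ∀ a < n, exd ℓv a ≤ k := by
    intro ℓv a ha
    rw [hexd]
    simp only [dif_pos ha]
    exact Nat.lt_succ_iff.1 (ℓv ⟨a, ha⟩).isLt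
  refine ⟨k, Good.toList.map (fun π =>
    (Finset.univ : Finset (PType × (Fin n → Fin (k + 1)))).toList.map
      (fun tp => (decide ((π tp : ℕ) < k), (π tp : ℕ), tp.1, exd tp.2))), ?_, ?_⟩
  · intro conj hconj atom hatom a
    simp only [List.mem_map] at hconj
    obtain ⟨π, hπ, rfl⟩ := hconj
    simp only [List.mem_map] at hatom
    obtain ⟨tp, htp, rfl⟩ := hatom
    show exd tp.2 a ≤ k
    rw [hexd]
    by_cases ha : a < n
    · simp only [dif_pos ha]
      exact Nat.lt_succ_iff.1 (tp.2 ⟨a, ha⟩).isLt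
    · simp only [dif_neg ha]
      omega
  · intro P w hv
    -- semantics of one atom
    have hatomsem : ∀ (π : (PType × (Fin n → Fin (k + 1))) → Fin (k + 1))
        (tp : PType × (Fin n → Fin (k + 1))) (v : ℕ → Elem),
        Sat P w v (nfAtom n k (decide ((π tp : ℕ) < k)) (π tp : ℕ) tp.1 (exd tp.2)) ↔
          profOf P w tp = π tp := by
      intro π tp v
      rw [sat_nfAtom (hBk tp.2)]
      have hc : (π tp : ℕ) ≤ k := Nat.lt_succ_iff.1 (π tp).isLt
      have hval : (profOf P w tp : ℕ) = min k ((clsSet n k P w tp.1 (exd tp.2)).card) := by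
        rw [hprofOf]
      by_cases hlt : (π tp : ℕ) < k
      · rw [show (decide ((π tp : ℕ) < k)) = true from decide_eq_true hlt]
        simp only [if_true]
        constructor
        · intro h1
          apply Fin.ext
          rw [hval]
          omega
        · intro h1
          have h2 := congrArg Fin.val h1
          rw [hval] at h2
          omega
      · rw [show (decide ((π tp : ℕ) < k)) = false from decide_eq_false hlt]
        simp only [Bool.false_eq_true, if_false]
        constructor
        · intro h1
          apply Fin.ext
          rw [hval]
          omega
        · intro h1
          have h2 := congrArg Fin.val h1
          rw [hval] at h2
          omega
    -- semantics of one conjunction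
    have hconjsem : ∀ (π : (PType × (Fin n → Fin (k + 1))) → Fin (k + 1)) (v : ℕ → Elem),
        Sat P w v (bigAnd (((Finset.univ :
            Finset (PType × (Fin n → Fin (k + 1)))).toList.map
          (fun tp => (decide ((π tp : ℕ) < k), (π tp : ℕ), tp.1, exd tp.2))).map
            fun atom => nfAtom n k atom.1 atom.2.1 atom.2.2.1 atom.2.2.2)) ↔
          profOf P w = π := by
      intro π v
      rw [sat_bigAnd]
      constructor
      · intro h
        funext tp
        have h1 := h (nfAtom n k (decide ((π tp : ℕ) < k)) (π tp : ℕ) tp.1 (exd tp.2))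
          (by
            rw [List.map_map]
            exact List.mem_map.2 ⟨tp, Finset.mem_toList.2 (Finset.mem_univ tp), rfl⟩)
        exact (hatomsem π tp v).1 h1
      · intro h ψ hψ
        rw [List.map_map] at hψ
        obtain ⟨tp, htp, rfl⟩ := List.mem_map.1 hψ
        exact (hatomsem π tp v).2 (by rw [h])
    -- profile equality transfers satisfaction
    have hprofEq : ∀ P₁ w₁, w₁.valid Alph P₁ → profOf P₁ w₁ = profOf P w →
        profEq n k P₁ w₁ P w := by
      intro P₁ w₁ hv₁ hpe θ ℓ
      by_cases hcase : ∀ a, a < n → ℓ a ≤ k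
      · set ℓv : Fin n → Fin (k + 1) :=
          fun i => ⟨ℓ i, Nat.lt_succ_of_le (hcase i i.2)⟩ with hℓv
        have hce : ∀ a < n, ℓ a = exd ℓv a := by
          intro a ha
          simp only [hexd, hℓv, dif_pos ha]
        rw [clsSet_congr hce, clsSet_congr hce]
        have h2 := congrFun hpe (θ, ℓv)
        have h3 := congrArg Fin.val h2
        rw [hprofOf] at h3
        exact h3
      · push_neg at hcase
        obtain ⟨a, ha, hka⟩ := hcase
        rw [clsSet_empty_of_gt ha hka, clsSet_empty_of_gt ha hka]
    have hmain : SatS P w φ ↔ profOf P w ∈ Good := by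
      constructor
      · intro h
        rw [hGood, Finset.mem_filter]
        exact ⟨Finset.mem_univ _, P, w, hv, h, rfl⟩
      · intro h
        rw [hGood, Finset.mem_filter] at h
        obtain ⟨-, P₁, w₁, hv₁, hsat₁, hpe⟩ := h
        exact (satS_iff_of_profEq hv₁ hv (hprofEq P₁ w₁ hv₁ hpe) hsim hsen
          (by omega)).1 hsat₁
    rw [hmain, SatS, sat_bigOr]
    simp only [List.map_map]
    constructor
    · intro h
      refine ⟨_, List.mem_map.2 ⟨profOf P w, Finset.mem_toList.2 h, rfl⟩, ?_⟩
      exact (hconjsem (profOf P w) _).2 rfl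
    · rintro ⟨ψ, hψ, hsat⟩
      obtain ⟨π, hπ, rfl⟩ := List.mem_map.1 hψ
      have h2 := (hconjsem π _).1 hsat
      rw [h2]
      exact Finset.mem_toList.1 hπ


end PSyn
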